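/- arXiv:math/0403446 — 6 statements merged into one kernel-verified Lean document; each statement's English description precedes it below -/
import Mathlib

section
/- Let f be a continuous function on the unit circle bΔ, and suppose there exist complex polynomials P and Q and a continuous function g on bΔ with |g(z)| ≤ 1/2 for all z ∈ bΔ such that z·f(z) − 1 = z·P(z) + conj(z·Q(z)) + g(z) for all z ∈ bΔ. Then f − P − Q is nonvanishing on bΔ and the winding number of (f − P − Q) restricted to bΔ around 0 equals −1. -/
open Polynomial Metric
open scoped Classical

/-- `g` (restricted to the unit circle) has winding number `n` around `0`:
there is a continuous argument lift `α` along `θ ↦ g (exp (iθ))` whose total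
increase over `[0, 2π]` is `2πn`. -/
def HasWindingNumber (g : ℂ → ℂ) (n : ℤ) : Prop :=
  ∃ α : ℝ → ℝ, Continuous α ∧
    (∀ θ : ℝ, g (Complex.exp (θ * Complex.I)) =
      (‖g (Complex.exp (θ * Complex.I))‖ : ℂ) * Complex.exp (α θ * Complex.I)) ∧
    α (2 * Real.pi) - α 0 = n * (2 * Real.pi)

/-- `f` on the unit circle extends continuously to the closed unit disc,
holomorphically on the open unit disc. -/
def ExtendsHolo (f : ℂ → ℂ) : Prop :=
  ∃ F : ℂ → ℂ, ContinuousOn F (closedBall 0 1) ∧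
    DifferentiableOn ℂ F (ball 0 1) ∧ ∀ z ∈ sphere (0:ℂ) 1, F z = f z

/-- Multiplicity of a zero of a (holomorphic) function: least `n` with
nonvanishing `n`-th derivative. -/
noncomputable def holoOrder (f : ℂ → ℂ) (z : ℂ) : ℕ :=
  sInf {n | iteratedDeriv n f z ≠ 0}

theorem stmt1 (f g : ℂ → ℂ) (P Q : Polynomial ℂ)
    (hf : ContinuousOn f (sphere (0:ℂ) 1)) (hg : ContinuousOn g (sphere (0:ℂ) 1))
    (hgb : ∀ z ∈ sphere (0:ℂ) 1, ‖g z‖ ≤ 1/2)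
    (heq : ∀ z ∈ sphere (0:ℂ) 1,
      z * f z - 1 = z * P.eval z + (starRingEnd ℂ) (z * Q.eval z) + g z) :
    (∀ z ∈ sphere (0:ℂ) 1, f z - P.eval z - Q.eval z ≠ 0) ∧
      HasWindingNumber (fun z => f z - P.eval z - Q.eval z) (-1) := by
  have key : ∀ z ∈ sphere (0:ℂ) 1, (1:ℝ)/2 ≤ (z * (f z - P.eval z - Q.eval z)).re := by
    intro z hz
    have e := heq z hz
    have hre : z * (f z - P.eval z - Q.eval z)
        = 1 + g z + ((starRingEnd ℂ) (z * Q.eval z) - z * Q.eval z) := by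
      linear_combination e
    rw [hre]
    have h1 : |(g z).re| ≤ ‖g z‖ := Complex.abs_re_le_norm (g z)
    have h2 := hgb z hz
    simp only [Complex.add_re, Complex.sub_re, Complex.one_re, Complex.conj_re]
    have := neg_abs_le (g z).re
    linarith
  have hne : ∀ z ∈ sphere (0:ℂ) 1, f z - P.eval z - Q.eval z ≠ 0 := by
    intro z hz hzero
    have := key z hz
    rw [hzero, mul_zero] at this
    simp at this
    linarith
  refine ⟨hne, ?_⟩
  -- continuity of h on the sphere
  have hcont : ContinuousOn (fun z => f z - P.eval z - Q.eval z) (sphere (0:ℂ) 1) :=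
    (hf.sub (P.continuous_aeval.continuousOn)).sub (Q.continuous_aeval.continuousOn)
  have hesph : ∀ θ : ℝ, Complex.exp (θ * Complex.I) ∈ sphere (0:ℂ) 1 := by
    intro θ
    simp [Complex.norm_exp_ofReal_mul_I]
  set W : ℝ → ℂ := fun θ => Complex.exp (θ * Complex.I) *
    (f (Complex.exp (θ * Complex.I)) - P.eval (Complex.exp (θ * Complex.I))
      - Q.eval (Complex.exp (θ * Complex.I))) with hW
  have hWcont : Continuous W := by
    apply Continuous.mul
    · exact Complex.continuous_exp.comp (Complex.continuous_ofReal.mul continuous_const)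
    · exact hcont.comp_continuous
        (Complex.continuous_exp.comp (Complex.continuous_ofReal.mul continuous_const)) hesph
  have hWre : ∀ θ : ℝ, (1:ℝ)/2 ≤ (W θ).re := fun θ => key _ (hesph θ)
  have hWslit : ∀ θ : ℝ, W θ ∈ Complex.slitPlane := by
    intro θ
    exact Complex.mem_slitPlane_iff.2 (Or.inl (by linarith [hWre θ]))
  have hWne : ∀ θ : ℝ, W θ ≠ 0 := by
    intro θ h0
    have := hWre θ
    rw [h0] at this
    simp at this
    linarith
  refine ⟨fun θ => (W θ).arg - θ, ?_, ?_, ?_⟩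
  · exact (continuous_iff_continuousAt.2 fun θ =>
      (Complex.continuousAt_arg (hWslit θ)).comp hWcont.continuousAt).sub continuous_id
  · intro θ
    have hz : Complex.exp ((θ:ℂ) * Complex.I) ≠ 0 := Complex.exp_ne_zero _
    have hpolar := Complex.norm_mul_exp_arg_mul_I (W θ)
    have habs : ‖W θ‖ = ‖f (Complex.exp (θ * Complex.I))
        - P.eval (Complex.exp (θ * Complex.I)) - Q.eval (Complex.exp (θ * Complex.I))‖ := by
      rw [hW]
      simp [map_mul, Complex.norm_exp_ofReal_mul_I]
    have key2 : (‖W θ‖ : ℂ)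
        * Complex.exp ((((W θ).arg - θ : ℝ) : ℂ) * Complex.I)
        * Complex.exp ((θ:ℂ) * Complex.I) = W θ := by
      rw [mul_assoc, ← Complex.exp_add,
        show (((W θ).arg - θ : ℝ) : ℂ) * Complex.I + (θ:ℂ) * Complex.I
          = ((W θ).arg : ℂ) * Complex.I from by push_cast; ring]
      exact hpolar
    show f (Complex.exp (θ * Complex.I)) - P.eval (Complex.exp (θ * Complex.I))
        - Q.eval (Complex.exp (θ * Complex.I))
      = (‖f (Complex.exp (θ * Complex.I)) - P.eval (Complex.exp (θ * Complex.I))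
          - Q.eval (Complex.exp (θ * Complex.I))‖ : ℂ)
        * Complex.exp ((((W θ).arg - θ : ℝ) : ℂ) * Complex.I)
    rw [show ((‖f (Complex.exp (θ * Complex.I)) - P.eval (Complex.exp (θ * Complex.I))
          - Q.eval (Complex.exp (θ * Complex.I))‖ : ℝ) : ℂ)
        = (‖W θ‖ : ℂ) from by rw [habs]]
    refine mul_left_cancel₀ hz ?_
    calc Complex.exp ((θ:ℂ) * Complex.I) * (f (Complex.exp (θ * Complex.I))
          - P.eval (Complex.exp (θ * Complex.I)) - Q.eval (Complex.exp (θ * Complex.I)))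
        = W θ := rfl
      _ = (‖W θ‖ : ℂ)
          * Complex.exp ((((W θ).arg - θ : ℝ) : ℂ) * Complex.I)
          * Complex.exp ((θ:ℂ) * Complex.I) := key2.symm
      _ = _ := by ring
  · have hW2pi : W (2 * Real.pi) = W 0 := by
      rw [hW]
      norm_num
    show (W (2 * Real.pi)).arg - 2 * Real.pi - ((W 0).arg - 0) = ((-1 : ℤ) : ℝ) * (2 * Real.pi)
    rw [hW2pi]
    push_cast
    ring
end

section
/- Let f be a continuous function on the unit circle bΔ satisfying: for every polynomial P such that f + P is nonvanishing on bΔ, the winding number of f + P around 0 is nonnegative. Then for every w ∈ ℂ with |w| > 1, the function z ↦ f(z)/(z − w) on bΔ also satisfies the same condition: for every polynomial P with f(z)/(z−w) + P(z) nonvanishing on bΔ, the winding number of z ↦ f(z)/(z−w) + P(z) around 0 is nonnegative. -/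
open Polynomial Metric
open scoped Classical

theorem stmt3 (f : ℂ → ℂ) (hf : ContinuousOn f (sphere (0:ℂ) 1))
    (h : ∀ P : Polynomial ℂ, (∀ z ∈ sphere (0:ℂ) 1, f z + P.eval z ≠ 0) →
      ∀ n : ℤ, HasWindingNumber (fun z => f z + P.eval z) n → 0 ≤ n) :
    ∀ w : ℂ, 1 < ‖w‖ →
      ∀ P : Polynomial ℂ, (∀ z ∈ sphere (0:ℂ) 1, f z / (z - w) + P.eval z ≠ 0) →
        ∀ n : ℤ, HasWindingNumber (fun z => f z / (z - w) + P.eval z) n → 0 ≤ n := by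
  intro w hw P hP n hn
  set Q : Polynomial ℂ := P * (X - C w) with hQdef
  have hzw : ∀ z ∈ sphere (0:ℂ) 1, z - w ≠ 0 := by
    intro z hz h0
    have hz1 : ‖z‖ = 1 := by simpa using hz
    rw [sub_eq_zero.mp h0] at hz1
    rw [hz1] at hw; linarith
  have hQeval : ∀ z : ℂ, Q.eval z = P.eval z * (z - w) := by
    intro z; simp [hQdef]
  have key : ∀ z ∈ sphere (0:ℂ) 1,
      f z + Q.eval z = (z - w) * (f z / (z - w) + P.eval z) := by
    intro z hz
    have h0 := hzw z hz
    rw [hQeval]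
    field_simp
  have hnv : ∀ z ∈ sphere (0:ℂ) 1, f z + Q.eval z ≠ 0 := by
    intro z hz
    rw [key z hz]
    exact mul_ne_zero (hzw z hz) (hP z hz)
  apply h Q hnv n
  obtain ⟨α, hαc, hαlift, hαdiff⟩ := hn
  set β : ℝ → ℝ := fun θ =>
    Complex.arg (-w) + Complex.arg (1 - Complex.exp (θ * Complex.I) / w) with hβdef
  have hnz : ∀ θ : ℝ, ‖Complex.exp ((θ:ℂ) * Complex.I)‖ = 1 := by
    intro θ; simp [Complex.norm_exp_ofReal_mul_I]
  have hre : ∀ θ : ℝ, 0 < (1 - Complex.exp (θ * Complex.I) / w).re := by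
    intro θ
    have h1 : ‖Complex.exp ((θ:ℂ) * Complex.I) / w‖ < 1 := by
      rw [norm_div, hnz θ, div_lt_one (by linarith : (0:ℝ) < ‖w‖)]; linarith
    have h2 : (Complex.exp ((θ:ℂ) * Complex.I) / w).re < 1 :=
      lt_of_le_of_lt (Complex.re_le_norm _) h1
    simp only [Complex.sub_re, Complex.one_re]
    linarith
  have hβc : Continuous β := by
    apply continuous_const.add
    rw [continuous_iff_continuousAt]
    intro θ
    have hc : ContinuousAt (fun x : ℝ => 1 - Complex.exp (↑x * Complex.I) / w) θ := by
      fun_prop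
    have ha : ContinuousAt Complex.arg (1 - Complex.exp (↑θ * Complex.I) / w) :=
      Complex.continuousAt_arg (Complex.mem_slitPlane_iff.mpr (Or.inl (hre θ)))
    exact ContinuousAt.comp (g := Complex.arg)
      (f := fun x : ℝ => 1 - Complex.exp (↑x * Complex.I) / w) ha hc
  have hβlift : ∀ θ : ℝ, Complex.exp (θ * Complex.I) - w =
      (‖Complex.exp (θ * Complex.I) - w‖ : ℂ) * Complex.exp (β θ * Complex.I) := by
    intro θ
    set z := Complex.exp ((θ:ℂ) * Complex.I) with hz
    have hw0 : w ≠ 0 := by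
      intro h0; rw [h0] at hw; simp at hw; linarith
    have hfac : z - w = (-w) * (1 - z / w) := by field_simp; ring
    rw [hfac]
    calc (-w) * (1 - z / w)
        = ((‖-w‖ : ℂ) * Complex.exp (Complex.arg (-w) * Complex.I)) *
          ((‖1 - z / w‖ : ℂ) *
            Complex.exp (Complex.arg (1 - z / w) * Complex.I)) := by
          rw [Complex.norm_mul_exp_arg_mul_I, Complex.norm_mul_exp_arg_mul_I]
      _ = (‖(-w) * (1 - z / w)‖ : ℂ) * Complex.exp (β θ * Complex.I) := by
          rw [norm_mul, hβdef]
          push_cast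
          rw [add_mul, Complex.exp_add]
          ring
  refine ⟨fun θ => α θ + β θ, hαc.add hβc, ?_, ?_⟩
  · intro θ
    set z := Complex.exp ((θ:ℂ) * Complex.I) with hz
    have hzs : z ∈ sphere (0:ℂ) 1 := by
      rw [mem_sphere_iff_norm, sub_zero]; exact hnz θ
    have hgl := hαlift θ
    simp only at hgl ⊢
    calc f z + Q.eval z
        = (z - w) * (f z / (z - w) + P.eval z) := key z hzs
      _ = ((‖z - w‖ : ℂ) * Complex.exp (β θ * Complex.I)) *
          ((‖f z / (z - w) + P.eval z‖ : ℂ) * Complex.exp (α θ * Complex.I)) := by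
          rw [← hβlift θ, ← hgl]
      _ = (‖(z - w) * (f z / (z - w) + P.eval z)‖ : ℂ) *
          Complex.exp ((α θ + β θ : ℝ) * Complex.I) := by
          rw [norm_mul]
          push_cast
          rw [add_mul, Complex.exp_add]
          ring
      _ = (‖f z + Q.eval z‖ : ℂ) * Complex.exp ((α θ + β θ : ℝ) * Complex.I) := by
          rw [← key z hzs]
  · have e : Complex.exp (((2 * Real.pi : ℝ) : ℂ) * Complex.I) =
        Complex.exp (((0:ℝ) : ℂ) * Complex.I) := by
      push_cast
      rw [Complex.exp_two_pi_mul_I]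
      norm_num
    have hβper : β (2 * Real.pi) = β 0 := by
      simp only [hβdef]
      rw [e]
    simp only
    rw [hβper]
    linarith [hαdiff]
end

section
/- Let f be a continuous function on the unit circle bΔ such that ∫_{bΔ} z^n f(z) dz = 0 for every nonnegative integer n. Then f extends continuously to the closed unit disc so as to be holomorphic on the open unit disc. -/
open Polynomial Metric
open scoped Classical

noncomputable section
namespace Stmt9Aux

open Complex Filter intervalIntegral

/-- `E k θ = exp (i k θ)`. -/
def E (k : ℤ) (θ : ℝ) : ℂ := Complex.exp (k * θ * Complex.I)

lemma E_continuous (k : ℤ) : Continuous (E k) := by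
  unfold E; fun_prop

lemma E_mul (k l : ℤ) (θ : ℝ) : E k θ * E l θ = E (k + l) θ := by
  unfold E; rw [← Complex.exp_add]; congr 1; push_cast; ring

lemma E_sub (k : ℤ) (s t : ℝ) : E k (s - t) = E k s * E (-k) t := by
  unfold E; rw [← Complex.exp_add]; congr 1; push_cast; ring

lemma norm_E (k : ℤ) (θ : ℝ) : ‖E k θ‖ = 1 := by
  unfold E
  rw [show (k : ℂ) * θ * Complex.I = ((k * θ : ℝ) : ℂ) * Complex.I by push_cast; ring]
  rw [Complex.norm_exp_ofReal_mul_I]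

lemma integral_E (k : ℤ) :
    ∫ θ in (0:ℝ)..(2*Real.pi), E k θ = if k = 0 then (2*Real.pi : ℂ) else 0 := by
  rcases eq_or_ne k 0 with rfl | hk
  · simp only [if_pos rfl]
    simp [E, Complex.exp_zero]
  · rw [if_neg hk]
    have h1 : ∀ θ : ℝ, E k θ = Complex.exp (((k:ℂ) * Complex.I) * θ) := by
      intro θ; unfold E; congr 1; ring
    simp_rw [h1]
    rw [integral_exp_mul_complex (by
      simp only [ne_eq, mul_eq_zero, Complex.I_ne_zero, or_false]
      exact_mod_cast hk)]
    have h2 : Complex.exp ((k:ℂ) * Complex.I * (2*Real.pi)) = 1 := by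
      rw [show (k:ℂ) * Complex.I * (2*(Real.pi:ℂ)) = k * (2 * Real.pi * Complex.I) by
        push_cast; ring]
      exact Complex.exp_int_mul_two_pi_mul_I k
    simp [h2]

/-- Dirichlet-type kernel. -/
def Dk (N : ℕ) (s : ℝ) : ℂ := ∑ k ∈ Finset.range N, E k s

lemma Dk_continuous (N : ℕ) : Continuous (Dk N) :=
  continuous_finset_sum _ fun k _ => E_continuous _

lemma normSq_Dk (N : ℕ) (s : ℝ) :
    ((‖Dk N s‖ : ℝ) : ℂ)^2
      = ∑ p ∈ Finset.range N ×ˢ Finset.range N, E ((p.1 : ℤ) - p.2) s := by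
  have h1 : ((‖Dk N s‖ : ℝ) : ℂ)^2 = Dk N s * (starRingEnd ℂ) (Dk N s) := by
    rw [Complex.mul_conj, Complex.normSq_eq_norm_sq]
    push_cast; ring
  have h2 : (starRingEnd ℂ) (Dk N s) = ∑ l ∈ Finset.range N, E (-(l:ℤ)) s := by
    unfold Dk
    rw [map_sum]
    refine Finset.sum_congr rfl fun l _ => ?_
    unfold E
    rw [← Complex.exp_conj]
    congr 1
    simp only [map_mul, Complex.conj_I, Complex.conj_ofReal, map_intCast]
    push_cast; ring
  rw [h1, h2, Dk, Finset.sum_mul_sum, Finset.sum_product]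
  refine Finset.sum_congr rfl fun j _ => Finset.sum_congr rfl fun l _ => ?_
  rw [E_mul, sub_eq_add_neg]

lemma key_expand (h : ℝ → ℂ) (hc : Continuous h) (N : ℕ) (t : ℝ) :
    ∫ θ in (0:ℝ)..(2*Real.pi), h θ * ((‖Dk N (t - θ)‖ : ℝ) : ℂ)^2
      = ∑ p ∈ Finset.range N ×ˢ Finset.range N,
          E ((p.1:ℤ) - p.2) t * ∫ θ in (0:ℝ)..(2*Real.pi), h θ * E (-((p.1:ℤ) - p.2)) θ := by
  have h1 : ∀ θ : ℝ, h θ * ((‖Dk N (t - θ)‖ : ℝ) : ℂ)^2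
      = ∑ p ∈ Finset.range N ×ˢ Finset.range N,
          E ((p.1:ℤ)-p.2) t * (h θ * E (-((p.1:ℤ)-p.2)) θ) := by
    intro θ
    rw [normSq_Dk, Finset.mul_sum]
    refine Finset.sum_congr rfl fun p _ => ?_
    rw [E_sub]
    ring
  simp_rw [h1]
  rw [intervalIntegral.integral_finset_sum]
  · exact Finset.sum_congr rfl fun p _ => intervalIntegral.integral_const_mul _ _
  · intro p _
    exact ((continuous_const.mul (hc.mul (E_continuous _)))).intervalIntegrable _ _

lemma mass (N : ℕ) (t : ℝ) :
    ∫ θ in (0:ℝ)..(2*Real.pi), (‖Dk N (t - θ)‖^2 : ℝ) = 2*Real.pi*N := by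
  have hC : (∫ θ in (0:ℝ)..(2*Real.pi), (1:ℂ) * ((‖Dk N (t - θ)‖ : ℝ) : ℂ)^2)
      = ((2*Real.pi*N : ℝ) : ℂ) := by
    rw [key_expand (fun _ => (1:ℂ)) continuous_const N t]
    have h2 : ∀ p ∈ Finset.range N ×ˢ Finset.range N,
        E ((p.1:ℤ)-p.2) t * (∫ θ in (0:ℝ)..(2*Real.pi), (1:ℂ) * E (-((p.1:ℤ)-p.2)) θ)
        = if p.1 = p.2 then ((2*Real.pi:ℝ):ℂ) else 0 := by
      intro p _
      simp_rw [one_mul]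
      rw [integral_E]
      by_cases hp : p.1 = p.2
      · rw [if_pos hp, if_pos (by omega), hp]
        simp [E, Complex.exp_zero]
      · rw [if_neg (by omega), if_neg hp, mul_zero]
    rw [Finset.sum_congr rfl h2, Finset.sum_product]
    have h3 : ∀ j ∈ Finset.range N,
        (∑ l ∈ Finset.range N, if j = l then ((2*Real.pi:ℝ):ℂ) else 0)
          = ((2*Real.pi:ℝ):ℂ) := by
      intro j hj
      rw [Finset.sum_ite_eq]
      exact if_pos hj
    rw [Finset.sum_congr rfl h3, Finset.sum_const, Finset.card_range]
    push_cast; ring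
  have h4 : ((∫ θ in (0:ℝ)..(2*Real.pi), (‖Dk N (t-θ)‖^2 : ℝ) : ℝ) : ℂ)
      = ((2*Real.pi*N : ℝ) : ℂ) := by
    rw [← intervalIntegral.integral_ofReal]
    rw [← hC]
    refine intervalIntegral.integral_congr fun θ _ => ?_
    push_cast; ring
  exact_mod_cast h4

lemma contraction (h : ℝ → ℂ) (hc : Continuous h) {M : ℝ} (hM : ∀ θ, ‖h θ‖ ≤ M)
    (N : ℕ) (t : ℝ) :
    ‖∫ θ in (0:ℝ)..(2*Real.pi), h θ * ((‖Dk N (t - θ)‖ : ℝ) : ℂ)^2‖ ≤ M * (2*Real.pi*N) := by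
  have h0 : (0:ℝ) ≤ 2*Real.pi := by positivity
  have hcK : Continuous fun θ : ℝ => (‖Dk N (t - θ)‖^2 : ℝ) :=
    (((Dk_continuous N).comp (continuous_const.sub continuous_id)).norm).pow 2
  calc ‖∫ θ in (0:ℝ)..(2*Real.pi), h θ * ((‖Dk N (t - θ)‖ : ℝ) : ℂ)^2‖
      ≤ ∫ θ in (0:ℝ)..(2*Real.pi), ‖h θ * ((‖Dk N (t - θ)‖ : ℝ) : ℂ)^2‖ :=
        intervalIntegral.norm_integral_le_integral_norm h0
    _ = ∫ θ in (0:ℝ)..(2*Real.pi), ‖h θ‖ * (‖Dk N (t - θ)‖^2 : ℝ) := by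
        refine intervalIntegral.integral_congr fun θ _ => ?_
        rw [norm_mul, norm_pow, Complex.norm_real, Real.norm_eq_abs, abs_norm]
    _ ≤ ∫ θ in (0:ℝ)..(2*Real.pi), M * (‖Dk N (t - θ)‖^2 : ℝ) := by
        refine intervalIntegral.integral_mono_on h0 ?_ ?_ fun θ _ => ?_
        · exact ((hc.norm.mul hcK)).intervalIntegrable _ _
        · exact ((continuous_const.mul hcK)).intervalIntegrable _ _
        · exact mul_le_mul_of_nonneg_right (hM θ) (by positivity)
    _ = M * (2*Real.pi*N) := by
        rw [intervalIntegral.integral_const_mul, mass]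

lemma card_fiber (N : ℕ) (m : ℤ) :
    N ≤ ((Finset.range N ×ˢ Finset.range N).filter
        (fun p => (p.1:ℤ) - p.2 = m)).card + m.natAbs ∧
    ((Finset.range N ×ˢ Finset.range N).filter
        (fun p => (p.1:ℤ) - p.2 = m)).card ≤ N := by
  constructor
  · have hinj := Finset.card_le_card_of_injOn
      (f := fun i : ℕ => (i + m.toNat, i + (-m).toNat))
      (s := Finset.range (N - m.natAbs))
      (t := (Finset.range N ×ˢ Finset.range N).filter (fun p => (p.1:ℤ) - p.2 = m))
      (by
        intro i hi
        simp only [Finset.mem_coe, Finset.mem_range] at hi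
        simp only [Finset.mem_coe, Finset.mem_filter, Finset.mem_product, Finset.mem_range]
        refine ⟨⟨by omega, by omega⟩, by push_cast; omega⟩)
      (by
        intro i _ j _ hij
        simpa using congrArg Prod.fst hij)
    rw [Finset.card_range] at hinj
    omega
  · have hinj := Finset.card_le_card_of_injOn
      (f := fun p : ℕ × ℕ => p.1)
      (s := (Finset.range N ×ˢ Finset.range N).filter (fun p => (p.1:ℤ) - p.2 = m))
      (t := Finset.range N)
      (by
        intro p hp
        simp only [Finset.mem_coe, Finset.mem_filter, Finset.mem_product, Finset.mem_range] at hp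
        exact Finset.mem_range.mpr hp.1.1)
      (by
        intro p hp q hq hpq
        simp only at hpq
        simp only [Finset.mem_coe, Finset.mem_filter, Finset.mem_product,
          Finset.mem_range] at hp hq
        have : p.2 = q.2 := by omega
        exact Prod.ext hpq this)
    rw [Finset.card_range] at hinj
    exact hinj

/-- Normalized Fejér mean operator. -/
def Sig (h : ℝ → ℂ) (N : ℕ) (t : ℝ) : ℂ :=
  ((N:ℂ))⁻¹ * (((2*Real.pi : ℝ)):ℂ)⁻¹ *
    ∫ θ in (0:ℝ)..(2*Real.pi), h θ * ((‖Dk N (t - θ)‖ : ℝ) : ℂ)^2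

lemma Sig_norm_le (h : ℝ → ℂ) (hc : Continuous h) {M : ℝ} (hM : ∀ θ, ‖h θ‖ ≤ M)
    (N : ℕ) (hN : 1 ≤ N) (t : ℝ) : ‖Sig h N t‖ ≤ M := by
  have hM0 : 0 ≤ M := le_trans (norm_nonneg _) (hM 0)
  have hπ := Real.pi_pos
  have hN0 : (0:ℝ) < N := by exact_mod_cast hN
  unfold Sig
  rw [norm_mul, norm_mul, norm_inv, norm_inv, Complex.norm_natCast, Complex.norm_real,
    Real.norm_eq_abs, abs_of_pos (by positivity)]
  have hb := contraction h hc hM N t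
  calc (N:ℝ)⁻¹ * (2*Real.pi)⁻¹ * ‖∫ θ in (0:ℝ)..(2*Real.pi), h θ * ((‖Dk N (t - θ)‖:ℝ):ℂ)^2‖
      ≤ (N:ℝ)⁻¹ * (2*Real.pi)⁻¹ * (M * (2*Real.pi*N)) := by gcongr
    _ = M := by
        rw [show (N:ℝ)⁻¹ * (2*Real.pi)⁻¹ * (M*(2*Real.pi*(N:ℝ)))
            = M * ((2*Real.pi) * (2*Real.pi)⁻¹) * ((N:ℝ) * (N:ℝ)⁻¹) by ring,
          mul_inv_cancel₀ (by positivity : (2*Real.pi:ℝ) ≠ 0),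
          mul_inv_cancel₀ (by positivity : ((N:ℝ)) ≠ 0), mul_one, mul_one]

lemma Sig_E (m : ℤ) (N : ℕ) (hN : 1 ≤ N) (t : ℝ) :
    ‖Sig (E m) N t - E m t‖ ≤ (m.natAbs : ℝ)/N := by
  have hπ := Real.pi_pos
  have hN0 : (0:ℝ) < N := by exact_mod_cast hN
  set K := ((Finset.range N ×ˢ Finset.range N).filter
      (fun p => (p.1:ℤ) - p.2 = m)).card with hK
  have h1 : Sig (E m) N t = ((K:ℂ)/N) * E m t := by
    unfold Sig
    rw [key_expand (E m) (E_continuous m) N t]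
    have h2 : ∀ p ∈ Finset.range N ×ˢ Finset.range N,
        E ((p.1:ℤ)-p.2) t * ∫ θ in (0:ℝ)..(2*Real.pi), E m θ * E (-((p.1:ℤ)-p.2)) θ
        = if (p.1:ℤ)-p.2 = m then ((2*Real.pi:ℝ):ℂ) * E m t else 0 := by
      intro p _
      have h3 : ∀ θ:ℝ, E m θ * E (-((p.1:ℤ)-p.2)) θ = E (m - ((p.1:ℤ)-p.2)) θ := fun θ => by
        rw [E_mul, show m + -((p.1:ℤ) - p.2) = m - ((p.1:ℤ)-p.2) from by ring]
      simp_rw [h3, integral_E]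
      by_cases hp : (p.1:ℤ)-p.2 = m
      · rw [if_pos (by omega), if_pos hp, hp]; push_cast; ring
      · rw [if_neg (by omega), if_neg hp, mul_zero]
    rw [Finset.sum_congr rfl h2, ← Finset.sum_filter, Finset.sum_const, nsmul_eq_mul, ← hK]
    have h2π : ((2*Real.pi:ℝ):ℂ) ≠ 0 := by
      exact_mod_cast (by positivity : (2*Real.pi:ℝ) ≠ 0)
    have hN0' : (N:ℂ) ≠ 0 := by exact_mod_cast (by positivity : (N:ℝ) ≠ 0)
    rw [show ((N:ℂ))⁻¹ * (((2*Real.pi:ℝ)):ℂ)⁻¹ * ((K:ℂ) * (((2*Real.pi:ℝ):ℂ) * E m t)) =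
        (K:ℂ)/N * E m t * ((((2*Real.pi:ℝ):ℂ)) * (((2*Real.pi:ℝ):ℂ))⁻¹) by
          rw [div_eq_mul_inv]; ring,
      mul_inv_cancel₀ h2π, mul_one]
  have hcard := card_fiber N m
  have h4 : ((K:ℂ)/N) * E m t - E m t = ((((K:ℝ)/N - 1) : ℝ) : ℂ) * E m t := by
    push_cast; ring
  rw [h1, h4, norm_mul, norm_E, mul_one, Complex.norm_real, Real.norm_eq_abs]
  have hKN : (K:ℝ) ≤ N := Nat.cast_le.mpr hcard.2
  have hKN2 : (N:ℝ) ≤ (K:ℝ) + (m.natAbs:ℝ) := by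
    rw [← Nat.cast_add]; exact Nat.cast_le.mpr hcard.1
  rw [abs_of_nonpos (by rw [sub_nonpos, div_le_one hN0]; exact hKN)]
  rw [neg_sub, show (1:ℝ) - K/N = ((N:ℝ) - K)/N by field_simp]
  gcongr
  linarith

lemma trig_approx (g : ℝ → ℂ) (hg : Continuous g)
    (hper : Function.Periodic g (2*Real.pi)) {ε : ℝ} (hε : 0 < ε) :
    ∃ (n : ℕ) (a : Fin n → ℂ) (m : Fin n → ℤ),
      ∀ θ : ℝ, ‖g θ - ∑ i, a i * E (m i) θ‖ ≤ ε := by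
  have h2π : 0 < 2*Real.pi := by positivity
  haveI : Fact (0 < 2*Real.pi) := ⟨h2π⟩
  set G : C(AddCircle (2*Real.pi), ℂ) := ⟨hper.lift, continuous_coinduced_dom.mpr hg⟩ with hGdef
  have hGmem : G ∈ closure ((Submodule.span ℂ
      (Set.range (@fourier (2*Real.pi)))) : Set C(AddCircle (2*Real.pi), ℂ)) := by
    rw [← Submodule.topologicalClosure_coe, span_fourier_closure_eq_top]
    exact Submodule.mem_top
  obtain ⟨P, hPmem, hPdist⟩ := Metric.mem_closure_iff.mp hGmem ε hε
  obtain ⟨n, a, gg, hsum⟩ := Submodule.mem_span_set'.mp hPmem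
  choose mm hmm using fun i => (gg i).2
  refine ⟨n, a, mm, fun θ => ?_⟩
  have hgθ : g θ = G (θ : AddCircle (2*Real.pi)) := by
    rw [hGdef]; exact (hper.lift_coe θ).symm
  have hPθ : (∑ i, a i * E (mm i) θ) = P (θ : AddCircle (2*Real.pi)) := by
    rw [← hsum, ContinuousMap.sum_apply]
    refine Finset.sum_congr rfl fun i _ => ?_
    rw [ContinuousMap.smul_apply, smul_eq_mul]
    congr 1
    rw [← hmm i, fourier_coe_apply]
    unfold E
    congr 1
    rw [eq_div_iff (by exact_mod_cast (ne_of_gt h2π) : ((2*Real.pi:ℝ):ℂ) ≠ 0)]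
    push_cast
    ring
  rw [hgθ, hPθ, ← dist_eq_norm]
  exact le_of_lt (lt_of_le_of_lt (ContinuousMap.dist_apply_le_dist _) hPdist)

lemma fejer_conv (g : ℝ → ℂ) (hg : Continuous g) (hper : Function.Periodic g (2*Real.pi))
    {ε : ℝ} (hε : 0 < ε) :
    ∃ N₀ : ℕ, 1 ≤ N₀ ∧ ∀ N, N₀ ≤ N → ∀ t : ℝ, ‖Sig g N t - g t‖ ≤ ε := by
  obtain ⟨n, a, m, hP⟩ := trig_approx g hg hper (by positivity : (0:ℝ) < ε/3)
  set P : ℝ → ℂ := fun θ => ∑ i, a i * E (m i) θ with hPdef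
  have hPc : Continuous P :=
    continuous_finset_sum _ fun i _ => continuous_const.mul (E_continuous _)
  set C : ℝ := ∑ i, ‖a i‖ * (m i).natAbs with hC
  have hC0 : 0 ≤ C := Finset.sum_nonneg fun i _ => by positivity
  refine ⟨⌈3*C/ε⌉₊ + 1, by omega, fun N hN t => ?_⟩
  have hN1 : 1 ≤ N := by omega
  have hN0 : (0:ℝ) < N := by exact_mod_cast hN1
  have hKc : ∀ t : ℝ, Continuous fun θ : ℝ => ((‖Dk N (t - θ)‖:ℝ):ℂ)^2 := by
    intro t
    have h1 : Continuous fun θ : ℝ => ‖Dk N (t - θ)‖ :=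
      ((Dk_continuous N).comp (continuous_const.sub continuous_id)).norm
    fun_prop
  have hint : ∀ (h : ℝ → ℂ), Continuous h → ∀ t : ℝ, IntervalIntegrable
      (fun θ => h θ * ((‖Dk N (t - θ)‖:ℝ):ℂ)^2) MeasureTheory.volume 0 (2*Real.pi) :=
    fun h hh t => (hh.mul (hKc t)).intervalIntegrable _ _
  have hsplit : Sig g N t = Sig (fun θ => g θ - P θ) N t + Sig P N t := by
    unfold Sig
    rw [← mul_add, ← intervalIntegral.integral_add (hint (fun θ => g θ - P θ) (hg.sub hPc) t) (hint _ hPc t)]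
    congr 1
    refine intervalIntegral.integral_congr fun θ _ => ?_
    ring
  have hSigP : Sig P N t = ∑ i, a i * Sig (E (m i)) N t := by
    unfold Sig
    have h1 : ∀ θ:ℝ, P θ * ((‖Dk N (t-θ)‖:ℝ):ℂ)^2
        = ∑ i, a i * (E (m i) θ * ((‖Dk N (t-θ)‖:ℝ):ℂ)^2) := by
      intro θ
      rw [hPdef, Finset.sum_mul]
      exact Finset.sum_congr rfl fun i _ => by ring
    simp_rw [h1]
    rw [intervalIntegral.integral_finset_sum
      (f := fun i θ => a i * (E (m i) θ * ((‖Dk N (t-θ)‖:ℝ):ℂ)^2))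
      (fun i _ => (continuous_const.mul ((E_continuous _).mul (hKc t))).intervalIntegrable _ _)]
    rw [Finset.mul_sum]
    refine Finset.sum_congr rfl fun i _ => ?_
    rw [intervalIntegral.integral_const_mul]
    ring
  have hb1 : ‖Sig (fun θ => g θ - P θ) N t‖ ≤ ε/3 :=
    Sig_norm_le _ (hg.sub hPc) hP N hN1 t
  have hb2 : ‖Sig P N t - P t‖ ≤ C/N := by
    rw [hSigP, hPdef]
    rw [← Finset.sum_sub_distrib]
    calc ‖∑ i, (a i * Sig (E (m i)) N t - a i * E (m i) t)‖
        ≤ ∑ i, ‖a i * Sig (E (m i)) N t - a i * E (m i) t‖ := norm_sum_le _ _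
      _ ≤ ∑ i, ‖a i‖ * ((m i).natAbs / N) := by
          refine Finset.sum_le_sum fun i _ => ?_
          rw [← mul_sub, norm_mul]
          exact mul_le_mul_of_nonneg_left (Sig_E (m i) N hN1 t) (norm_nonneg _)
      _ = C/N := by
          rw [hC, Finset.sum_div]
          exact Finset.sum_congr rfl fun i _ => by rw [mul_div_assoc]
  have hb3 : C/N ≤ ε/3 := by
    rw [div_le_iff₀ hN0]
    have h1 : (3*C/ε : ℝ) ≤ ⌈3*C/ε⌉₊ := Nat.le_ceil _
    have h2 : ((⌈3*C/ε⌉₊ : ℕ) : ℝ) + 1 ≤ N := by exact_mod_cast hN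
    have h3 : 3*C/ε ≤ N := by linarith
    rw [div_le_iff₀ hε] at h3
    linarith
  have hb4 : ‖P t - g t‖ ≤ ε/3 := by rw [norm_sub_rev]; exact hP t
  calc ‖Sig g N t - g t‖
      = ‖Sig (fun θ => g θ - P θ) N t + (Sig P N t - P t) + (P t - g t)‖ := by
        rw [hsplit]; congr 1; ring
    _ ≤ ‖Sig (fun θ => g θ - P θ) N t + (Sig P N t - P t)‖ + ‖P t - g t‖ := norm_add_le _ _
    _ ≤ ‖Sig (fun θ => g θ - P θ) N t‖ + ‖Sig P N t - P t‖ + ‖P t - g t‖ := by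
        gcongr; exact norm_add_le _ _
    _ ≤ ε/3 + ε/3 + ε/3 := by gcongr; exact le_trans hb2 hb3
    _ = ε := by ring

end Stmt9Aux


open Complex Filter Topology Stmt9Aux in
theorem stmt9 (f : ℂ → ℂ) (hf : ContinuousOn f (sphere (0:ℂ) 1))
    (h : ∀ n : ℕ, (∮ z in C(0, 1), z ^ n * f z) = 0) :
    ExtendsHolo f := by
  classical
  have hmem : ∀ θ : ℝ, Complex.exp (θ * Complex.I) ∈ sphere (0:ℂ) 1 := by
    intro θ
    rw [mem_sphere_iff_norm, sub_zero, Complex.norm_exp_ofReal_mul_I]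
  set g : ℝ → ℂ := fun θ => f (Complex.exp (θ * Complex.I)) with hg_def
  have hg_cont : Continuous g := by
    refine hf.comp_continuous ?_ hmem
    fun_prop
  have hg_per : Function.Periodic g (2*Real.pi) := by
    intro θ
    simp only [hg_def]
    congr 1
    rw [show ((θ + 2*Real.pi : ℝ) : ℂ) * Complex.I
        = (θ:ℂ)*Complex.I + 2*Real.pi*Complex.I by push_cast; ring]
    rw [Complex.exp_add, Complex.exp_two_pi_mul_I, mul_one]
  set c : ℤ → ℂ := fun k => ∫ θ in (0:ℝ)..(2*Real.pi), g θ * E (-k) θ with hc_def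
  -- negative coefficients vanish
  have hc_neg : ∀ k : ℤ, k < 0 → c k = 0 := by
    intro k hk
    set n : ℕ := (-k-1).toNat with hn
    have hkn : -k = (n:ℤ) + 1 := by omega
    have h0 := h n
    rw [circleIntegral] at h0
    have hintg : ∀ θ : ℝ, deriv (circleMap 0 1) θ • ((circleMap 0 1 θ) ^ n * f (circleMap 0 1 θ))
        = Complex.I * (g θ * E ((n:ℤ)+1) θ) := by
      intro θ
      rw [deriv_circleMap]
      have hcm : circleMap 0 1 θ = Complex.exp (θ * Complex.I) := by
        rw [circleMap_zero]; push_cast; rw [one_mul]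
      rw [hcm, smul_eq_mul]
      have hpow : Complex.exp (↑θ * Complex.I) ^ n = Complex.exp ((n:ℂ) * (↑θ * Complex.I)) := by
        rw [Complex.exp_nat_mul]
      rw [hpow]
      have hE : E ((n:ℤ)+1) θ
          = Complex.exp (↑θ*Complex.I) * Complex.exp ((n:ℂ)*(↑θ*Complex.I)) := by
        unfold E
        rw [← Complex.exp_add]
        congr 1
        push_cast
        ring
      simp only [hE]
      ring
    rw [intervalIntegral.integral_congr (fun θ _ => hintg θ)] at h0
    rw [intervalIntegral.integral_const_mul] at h0
    have h1 : (∫ θ in (0:ℝ)..(2*Real.pi), g θ * E ((n:ℤ)+1) θ) = 0 :=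
      (mul_eq_zero.mp h0).resolve_left Complex.I_ne_zero
    rw [hc_def]
    simp only
    rw [hkn]
    exact h1
  -- the Fejér polynomials
  set q : ℕ → ℂ → ℂ := fun N w => ((N:ℂ))⁻¹ * (((2*Real.pi:ℝ)):ℂ)⁻¹ *
      ∑ p ∈ Finset.range N ×ˢ Finset.range N,
        c ((p.1:ℤ) - p.2) * w ^ ((p.1:ℤ)-(p.2:ℤ)).toNat with hq_def
  have hq_diff : ∀ N, Differentiable ℂ (q N) := by
    intro N
    apply Differentiable.const_mul
    apply Differentiable.fun_sum
    intro p _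
    exact (differentiable_pow _).const_mul _
  have hq_circle : ∀ N (t : ℝ), q N (Complex.exp (↑t * Complex.I)) = Sig g N t := by
    intro N t
    rw [Sig, key_expand g hg_cont N t]
    rw [hq_def]
    simp only
    congr 1
    refine Finset.sum_congr rfl fun p _ => ?_
    rcases lt_or_ge ((p.1:ℤ) - p.2) 0 with hk | hk
    · rw [hc_neg _ hk, zero_mul,
        show (∫ θ in (0:ℝ)..(2*Real.pi), g θ * E (-((p.1:ℤ)-p.2)) θ) = c ((p.1:ℤ)-p.2) from rfl,
        hc_neg _ hk, mul_zero]
    · have h1 : Complex.exp (↑t * Complex.I) ^ ((p.1:ℤ)-(p.2:ℤ)).toNat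
          = E ((p.1:ℤ) - p.2) t := by
        rw [← Complex.exp_nat_mul]
        unfold E
        congr 1
        rw [show ((((p.1:ℤ)-(p.2:ℤ)).toNat : ℕ) : ℂ) = (((p.1:ℤ) - p.2 : ℤ) : ℂ) by
          exact_mod_cast congrArg (Int.cast : ℤ → ℂ) (Int.toNat_of_nonneg hk)]
        ring
      rw [h1, hc_def]
      simp only
      ring
  -- uniform Cauchy on the closed ball
  have hcauchy : UniformCauchySeqOn (fun N z => q N z) atTop (closedBall (0:ℂ) 1) := by
    rw [Metric.uniformCauchySeqOn_iff]
    intro ε hε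
    obtain ⟨N₀, hN₀1, hN₀⟩ := fejer_conv g hg_cont hg_per (by positivity : (0:ℝ) < ε/3)
    refine ⟨N₀, fun N hN M hM z hz => ?_⟩
    have hfr : ∀ w ∈ frontier (ball (0:ℂ) 1), ‖q N w - q M w‖ ≤ ε/3 + ε/3 := by
      intro w hw
      rw [frontier_ball (0:ℂ) one_ne_zero] at hw
      have hw1 : ‖w‖ = 1 := by
        rw [mem_sphere_iff_norm, sub_zero] at hw; exact hw
      have hwexp : Complex.exp (↑(Complex.arg w) * Complex.I) = w := by
        have := Complex.norm_mul_exp_arg_mul_I w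
        rwa [hw1, Complex.ofReal_one, one_mul] at this
      set t := Complex.arg w
      calc ‖q N w - q M w‖
          = ‖(q N w - g t) - (q M w - g t)‖ := by congr 1; ring
        _ ≤ ‖q N w - g t‖ + ‖q M w - g t‖ := norm_sub_le _ _
        _ ≤ ε/3 + ε/3 := by
            have e1 := hN₀ N hN t
            have e2 := hN₀ M hM t
            rw [← hq_circle N t, hwexp] at e1
            rw [← hq_circle M t, hwexp] at e2
            exact add_le_add e1 e2
    have hmax := Complex.norm_le_of_forall_mem_frontier_norm_le
      (isBounded_ball (x := (0:ℂ)) (r := 1))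
      (((hq_diff N).sub (hq_diff M)).diffContOnCl) hfr
      (z := z) (by rwa [closure_ball (0:ℂ) one_ne_zero])
    rw [dist_eq_norm]
    calc ‖q N z - q M z‖ ≤ ε/3 + ε/3 := hmax
      _ < ε := by linarith
  -- the limit function
  set F : ℂ → ℂ := fun z => limUnder atTop (fun N => q N z) with hF_def
  have htends : ∀ z ∈ closedBall (0:ℂ) 1, Tendsto (fun N => q N z) atTop (𝓝 (F z)) := by
    intro z hz
    exact (hcauchy.cauchySeq hz).tendsto_limUnder
  have htu : TendstoUniformlyOn (fun N z => q N z) F atTop (closedBall (0:ℂ) 1) :=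
    hcauchy.tendstoUniformlyOn_of_tendsto htends
  refine ⟨F, ?_, ?_, ?_⟩
  · exact htu.continuousOn (Frequently.of_forall fun N => (hq_diff N).continuous.continuousOn)
  · exact ((htu.mono ball_subset_closedBall).tendstoLocallyUniformlyOn).differentiableOn
      (Eventually.of_forall fun N => (hq_diff N).differentiableOn) isOpen_ball
  · intro z hz
    have hz' : z ∈ closedBall (0:ℂ) 1 := sphere_subset_closedBall hz
    have hw1 : ‖z‖ = 1 := by
      rw [mem_sphere_iff_norm, sub_zero] at hz; exact hz
    have hwexp : Complex.exp (↑(Complex.arg z) * Complex.I) = z := by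
      have := Complex.norm_mul_exp_arg_mul_I z
      rwa [hw1, Complex.ofReal_one, one_mul] at this
    have h2 : Tendsto (fun N => q N z) atTop (𝓝 (f z)) := by
      rw [Metric.tendsto_atTop]
      intro ε hε
      obtain ⟨N₀, hN₀1, hN₀⟩ := fejer_conv g hg_cont hg_per (by positivity : (0:ℝ) < ε/2)
      refine ⟨N₀, fun N hN => ?_⟩
      have e1 := hN₀ N hN (Complex.arg z)
      rw [← hq_circle N (Complex.arg z), hwexp] at e1
      have : g (Complex.arg z) = f z := by rw [hg_def]; simp only; rw [hwexp]
      rw [this] at e1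
      rw [dist_eq_norm]
      linarith
    exact tendsto_nhds_unique (htends z hz') h2
end
end

section
/- Let f be a continuous function on the unit circle bΔ such that the Cauchy transform vanishes outside the closed unit disc: ∫_{bΔ} f(z)/(z − w) dz = 0 for all w ∈ ℂ with |w| > 1. Then f extends continuously to the closed unit disc so as to be holomorphic on the open unit disc. -/
open Polynomial Metric
open scoped Classical

section Poisson

open Real Complex

set_option linter.unnecessarySimpa false

/-- The Poisson kernel for the unit disc, parameterized by the circle map. -/
noncomputable def poissonK (w : ℂ) (θ : ℝ) : ℝ :=
  (1 - ‖w‖ ^ 2) / ‖circleMap 0 1 θ - w‖ ^ 2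

lemma circleMap_sub_ne (w : ℂ) (hw : ‖w‖ < 1) (θ : ℝ) : circleMap 0 1 θ - w ≠ 0 := by
  have h1 : ‖circleMap 0 1 θ‖ = 1 := by
    simpa using abs_circleMap_zero 1 θ
  intro hc
  rw [sub_eq_zero] at hc
  rw [hc] at h1
  linarith [h1 ▸ hw]

lemma poissonK_nonneg (w : ℂ) (hw : ‖w‖ < 1) (θ : ℝ) : 0 ≤ poissonK w θ := by
  apply div_nonneg
  · nlinarith [norm_nonneg w]
  · positivity

lemma poissonK_continuous (w : ℂ) (hw : ‖w‖ < 1) : Continuous (poissonK w) := by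
  apply Continuous.div continuous_const
  · fun_prop
  · intro θ
    have h := circleMap_sub_ne w hw θ
    have : 0 < ‖circleMap 0 1 θ - w‖ := norm_pos_iff.2 h
    positivity

/-- Key algebraic identity: the difference of Cauchy kernels at `w` and at the
reflected point `(conj w)⁻¹` is the Poisson kernel. -/
lemma kernel_identity (w : ℂ) (hw : ‖w‖ < 1) (hw0 : w ≠ 0) (θ : ℝ) :
    (2 * π * Complex.I : ℂ)⁻¹ *
      (deriv (circleMap 0 1) θ *
        ((circleMap 0 1 θ - w)⁻¹ - (circleMap 0 1 θ - ((starRingEnd ℂ) w)⁻¹)⁻¹)) =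
    (2 * π : ℂ)⁻¹ * (poissonK w θ : ℂ) := by
  set z := circleMap 0 1 θ with hz
  set u := (starRingEnd ℂ) w with hu
  have hzn : ‖z‖ = 1 := by
    have := norm_circleMap_zero 1 θ
    simpa [hz] using this
  have hz0 : z ≠ 0 := by intro hc; rw [hc] at hzn; simp at hzn
  have hzc : z * (starRingEnd ℂ) z = 1 := by
    rw [Complex.mul_conj', hzn]; norm_num
  have hu0 : u ≠ 0 := by simpa [hu] using hw0
  have hzw : z - w ≠ 0 := by
    intro hc; rw [sub_eq_zero] at hc; rw [← hc] at hw; linarith [hzn ▸ hw]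
  have huz : u * z - 1 ≠ 0 := by
    intro hc
    have h2 : ‖u * z‖ = ‖w‖ := by rw [norm_mul, hu, RCLike.norm_conj, hzn, mul_one]
    rw [sub_eq_zero] at hc
    rw [hc, norm_one] at h2; linarith
  have hzu : z - u⁻¹ ≠ 0 := by
    intro hc
    rw [sub_eq_zero] at hc
    exact huz (by rw [hc, mul_inv_cancel₀ hu0, sub_self])
  have hconj : (starRingEnd ℂ) z = z⁻¹ := by field_simp [← hzc]; rw [mul_comm]; exact hzc
  have hzic : z⁻¹ - u ≠ 0 := by
    intro hc
    rw [sub_eq_zero] at hc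
    exact huz (by rw [← hc]; field_simp; ring)
  have huz' : -1 + z * u ≠ 0 := fun hc => huz (by linear_combination hc)
  have key : z * ((z - w)⁻¹ - (z - u⁻¹)⁻¹) = (1 - w * u) / ((z - w) * (z⁻¹ - u)) := by
    rw [eq_div_iff (mul_ne_zero hzw hzic)]
    field_simp [huz']
    linear_combination (z * u - w * u) * (mul_inv_cancel₀ huz')
  have hP : ((poissonK w θ : ℝ) : ℂ)
      = (1 - w * u) / ((z - w) * ((starRingEnd ℂ) (z - w))) := by
    rw [poissonK]
    push_cast
    rw [← Complex.mul_conj', ← Complex.mul_conj']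
  rw [hP, deriv_circleMap, ← hz]
  have hD : (starRingEnd ℂ) (z - w) = z⁻¹ - u := by rw [map_sub, hconj, hu]
  rw [hD, ← key]
  have hπ : (π : ℂ) ≠ 0 := Complex.ofReal_ne_zero.2 Real.pi_ne_zero
  field_simp [hπ, Complex.I_ne_zero, hzw, hzu, hz0, hu0, huz']

/-- Poisson representation of the Cauchy integral, given vanishing of the
integral at the reflected exterior point. -/
lemma poisson_rep (g : ℂ → ℂ) (hg : ContinuousOn g (sphere (0:ℂ) 1))
    (w : ℂ) (hw : ‖w‖ < 1) (hw0 : w ≠ 0)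
    (hout : (∮ z in C(0, 1), (z - ((starRingEnd ℂ) w)⁻¹)⁻¹ • g z) = 0) :
    (2 * π * Complex.I : ℂ)⁻¹ • (∮ z in C(0, 1), (z - w)⁻¹ • g z)
      = ∫ θ in (0:ℝ)..(2 * π), (2 * π : ℂ)⁻¹ * (poissonK w θ : ℂ) * g (circleMap 0 1 θ) := by
  set v := ((starRingEnd ℂ) w)⁻¹ with hv
  have hvn : 1 < ‖v‖ := by
    rw [hv, norm_inv, RCLike.norm_conj]
    exact (one_lt_inv₀ (norm_pos_iff.2 hw0)).2 hw
  have hsw : ∀ z ∈ sphere (0:ℂ) 1, z - w ≠ 0 := by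
    intro z hz hc
    rw [sub_eq_zero] at hc
    rw [mem_sphere_zero_iff_norm] at hz
    rw [← hc] at hw; linarith [hz ▸ hw]
  have hsv : ∀ z ∈ sphere (0:ℂ) 1, z - v ≠ 0 := by
    intro z hz hc
    rw [sub_eq_zero] at hc
    rw [mem_sphere_zero_iff_norm] at hz
    rw [← hc] at hvn; linarith [hz ▸ hvn]
  have hc1 : CircleIntegrable (fun z => (z - w)⁻¹ • g z) 0 1 := by
    apply ContinuousOn.circleIntegrable zero_le_one
    exact (((continuousOn_id.sub continuousOn_const).inv₀ hsw).smul hg)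
  have hc2 : CircleIntegrable (fun z => (z - v)⁻¹ • g z) 0 1 := by
    apply ContinuousOn.circleIntegrable zero_le_one
    exact (((continuousOn_id.sub continuousOn_const).inv₀ hsv).smul hg)
  have step2 : (∮ z in C(0, 1), (z - w)⁻¹ • g z)
      = ∮ z in C(0, 1), ((z - w)⁻¹ - (z - v)⁻¹) • g z := by
    have := circleIntegral.integral_sub hc1 hc2
    simp only [← sub_smul] at this
    rw [this, hout, sub_zero]
  rw [step2]
  rw [circleIntegral]
  rw [← intervalIntegral.integral_smul]
  apply intervalIntegral.integral_congr
  intro θ _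
  have hk := kernel_identity w hw hw0 θ
  simp only [smul_eq_mul]
  linear_combination (g (circleMap 0 1 θ)) * hk

lemma poissonK_mass (w : ℂ) (hw : ‖w‖ < 1) (hw0 : w ≠ 0) :
    ∫ θ in (0:ℝ)..(2 * π), poissonK w θ = 2 * π := by
  set v := ((starRingEnd ℂ) w)⁻¹ with hv
  have hvn : 1 < ‖v‖ := by
    rw [hv, norm_inv, RCLike.norm_conj]
    exact (one_lt_inv₀ (norm_pos_iff.2 hw0)).2 hw
  have hout : (∮ z in C(0, 1), (z - v)⁻¹ • (1:ℂ)) = 0 := by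
    simp only [smul_eq_mul, mul_one]
    apply circleIntegral_eq_zero_of_differentiable_on_off_countable zero_le_one
      Set.countable_empty
    · apply ContinuousOn.inv₀ (continuousOn_id.sub continuousOn_const)
      intro z hz hc
      simp only [Pi.sub_apply, id_eq, sub_eq_zero] at hc
      rw [← hv] at hc
      have : ‖z‖ ≤ 1 := by simpa [mem_closedBall_zero_iff] using hz
      rw [← hc] at hvn; linarith
    · intro z hz
      apply DifferentiableAt.inv (differentiableAt_id.sub_const v)
      intro hc
      rw [sub_eq_zero] at hc
      have : ‖z‖ < 1 := by simpa [mem_ball_zero_iff] using hz.1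
      rw [← hc] at hvn; simp only [id_eq] at hvn; linarith
  have hrep := poisson_rep (fun _ => 1) continuousOn_const w hw hw0 hout
  simp only [smul_eq_mul, mul_one] at hrep
  rw [circleIntegral.integral_sub_inv_of_mem_ball
    (by simpa [mem_ball_zero_iff] using hw : w ∈ ball (0:ℂ) 1)] at hrep
  have hπ : (π : ℂ) ≠ 0 := Complex.ofReal_ne_zero.2 Real.pi_ne_zero
  have hone : (1 : ℂ) = ∫ θ in (0:ℝ)..(2 * π), (2 * π : ℂ)⁻¹ * (poissonK w θ : ℂ) := by
    rw [← hrep]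
    field_simp
  have h2 : (1 : ℂ) = (2 * π : ℂ)⁻¹ * ((∫ θ in (0:ℝ)..(2 * π), poissonK w θ : ℝ) : ℂ) := by
    rw [hone, intervalIntegral.integral_const_mul]
    congr 1
    exact_mod_cast (intervalIntegral.integral_ofReal (f := fun θ => poissonK w θ))
  field_simp at h2
  exact_mod_cast h2.symm

end Poisson

set_option maxHeartbeats 1000000 in
theorem stmt10 (f : ℂ → ℂ) (hf : ContinuousOn f (sphere (0:ℂ) 1))
    (h : ∀ w : ℂ, 1 < ‖w‖ → (∮ z in C(0, 1), f z / (z - w)) = 0) :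
    ExtendsHolo f := by
  classical
  have hfi : CircleIntegrable f 0 1 := hf.circleIntegrable zero_le_one
  set F₀ : ℂ → ℂ :=
    fun w => (2 * (Real.pi : ℂ) * Complex.I)⁻¹ • ∮ z in C(0, 1), (z - w)⁻¹ • f z with hF₀
  have han : ∀ w ∈ ball (0:ℂ) 1, AnalyticAt ℂ F₀ w := by
    intro w hw
    have hps := hasFPowerSeriesOn_cauchy_integral (f := f) (c := 0) (R := 1)
      (by exact_mod_cast hfi) one_pos
    have hmem : w ∈ Metric.eball (0:ℂ) ((1:NNReal) : ENNReal) := by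
      rw [Metric.eball_coe]
      simpa using hw
    have := hps.analyticAt_of_mem hmem
    convert this using 2
    all_goals exact rfl
  set F : ℂ → ℂ := fun z => if ‖z‖ < 1 then F₀ z else f z with hF
  have hFeq : ∀ z ∈ sphere (0:ℂ) 1, F z = f z := by
    intro z hz
    rw [mem_sphere_zero_iff_norm] at hz
    simp only [hF, hz, lt_irrefl, if_neg, lt_self_iff_false, ite_false]
  refine ⟨F, ?_, ?_, hFeq⟩
  · -- continuity on the closed ball
    intro w hw
    by_cases hwb : ‖w‖ < 1
    · -- interior point
      have hwb' : w ∈ ball (0:ℂ) 1 := mem_ball_zero_iff.2 hwb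
      have hcont : ContinuousAt F₀ w := (han w hwb').continuousAt
      apply ContinuousAt.continuousWithinAt
      apply hcont.congr
      filter_upwards [isOpen_ball.mem_nhds hwb'] with x hx
      simp only [hF, if_pos (mem_ball_zero_iff.1 hx)]
    · -- boundary point
      have hws : w ∈ sphere (0:ℂ) 1 := by
        rw [mem_closedBall_zero_iff] at hw
        rw [mem_sphere_zero_iff_norm]
        push_neg at hwb
        linarith
      have hwn : ‖w‖ = 1 := mem_sphere_zero_iff_norm.1 hws
      obtain ⟨M, hM⟩ := (isCompact_sphere (0:ℂ) 1).exists_bound_of_continuousOn hf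
      have hM0 : 0 ≤ M := le_trans (norm_nonneg (f w)) (hM w hws)
      rw [Metric.continuousWithinAt_iff]
      intro ε hε
      obtain ⟨δ₁, hδ₁pos, hδ₁⟩ := Metric.continuousWithinAt_iff.1 (hf w hws) (ε/2) (half_pos hε)
      refine ⟨min (min (δ₁/2) (1/2)) (ε * δ₁^2 / (64 * (M+1))), by positivity, ?_⟩
      intro x hx hdx
      have hdx1 : dist x w < δ₁/2 := lt_of_lt_of_le hdx
        (le_trans (min_le_left _ _) (min_le_left _ _))
      have hdx2 : dist x w < 1/2 := lt_of_lt_of_le hdx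
        (le_trans (min_le_left _ _) (min_le_right _ _))
      have hdx3 : dist x w < ε * δ₁^2 / (64 * (M+1)) := lt_of_lt_of_le hdx (min_le_right _ _)
      have hFw : F w = f w := hFeq w hws
      rw [hFw]
      by_cases hxb : ‖x‖ < 1
      · -- x in the open ball : Poisson estimate
        have hFx : F x = F₀ x := by simp only [hF, if_pos hxb]
        rw [hFx]
        have hx0 : x ≠ 0 := by
          intro hc
          rw [hc, dist_zero_left, hwn] at hdx2
          linarith
        set v := ((starRingEnd ℂ) x)⁻¹ with hv
        have hvn : 1 < ‖v‖ := by
          rw [hv, norm_inv, RCLike.norm_conj]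
          exact (one_lt_inv₀ (norm_pos_iff.2 hx0)).2 hxb
        have hh := h v hvn
        have hout : (∮ z in C(0, 1), (z - v)⁻¹ • f z) = 0 := by
          have he : (∮ z in C(0, 1), (z - v)⁻¹ • f z) = ∮ z in C(0, 1), f z / (z - v) :=
            circleIntegral.integral_congr zero_le_one fun z hz => by
              simp only [smul_eq_mul, div_eq_mul_inv]; ring
          rw [he, hh]
        have hrep := poisson_rep f hf x hxb hx0 hout
        have hmass := poissonK_mass x hxb hx0
        have hPc : Continuous (poissonK x) := poissonK_continuous x hxb
        have hfc : Continuous (fun θ => f (circleMap 0 1 θ)) :=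
          hf.comp_continuous (continuous_circleMap 0 1)
            (fun θ => circleMap_mem_sphere 0 zero_le_one θ)
        have i1 : IntervalIntegrable
            (fun θ => (2 * (Real.pi:ℂ))⁻¹ * (poissonK x θ : ℂ) * f (circleMap 0 1 θ))
            MeasureTheory.volume 0 (2*Real.pi) := by
          apply Continuous.intervalIntegrable
          exact (continuous_const.mul (Complex.continuous_ofReal.comp hPc)).mul hfc
        have i2 : IntervalIntegrable
            (fun θ => (2 * (Real.pi:ℂ))⁻¹ * (poissonK x θ : ℂ) * f w)
            MeasureTheory.volume 0 (2*Real.pi) := by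
          apply Continuous.intervalIntegrable
          exact (continuous_const.mul (Complex.continuous_ofReal.comp hPc)).mul continuous_const
        have hπ : (Real.pi : ℂ) ≠ 0 := Complex.ofReal_ne_zero.2 Real.pi_ne_zero
        have hconst : (∫ θ in (0:ℝ)..(2*Real.pi),
            (2 * (Real.pi:ℂ))⁻¹ * (poissonK x θ : ℂ) * f w) = f w := by
          have e1 : (fun θ => (2 * (Real.pi:ℂ))⁻¹ * (poissonK x θ : ℂ) * f w)
              = fun θ => ((2 * (Real.pi:ℂ))⁻¹ * f w) * ((poissonK x θ : ℝ) : ℂ) :=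
            funext fun θ => by ring
          rw [e1, intervalIntegral.integral_const_mul, intervalIntegral.integral_ofReal, hmass]
          push_cast
          field_simp
        have hsub : F₀ x - f w = ∫ θ in (0:ℝ)..(2*Real.pi),
            (2 * (Real.pi:ℂ))⁻¹ * (poissonK x θ : ℂ) * (f (circleMap 0 1 θ) - f w) := by
          calc F₀ x - f w
              = (∫ θ in (0:ℝ)..(2*Real.pi),
                  (2 * (Real.pi:ℂ))⁻¹ * (poissonK x θ : ℂ) * f (circleMap 0 1 θ))
                - ∫ θ in (0:ℝ)..(2*Real.pi),
                  (2 * (Real.pi:ℂ))⁻¹ * (poissonK x θ : ℂ) * f w := by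
                rw [hconst]
                exact congrArg (fun t => t - f w) hrep
            _ = ∫ θ in (0:ℝ)..(2*Real.pi),
                  ((2 * (Real.pi:ℂ))⁻¹ * (poissonK x θ : ℂ) * f (circleMap 0 1 θ)
                    - (2 * (Real.pi:ℂ))⁻¹ * (poissonK x θ : ℂ) * f w) :=
                (intervalIntegral.integral_sub i1 i2).symm
            _ = _ := by
                apply intervalIntegral.integral_congr
                intro θ _
                ring
        set B : ℝ := (1 - ‖x‖^2) * (2/δ₁)^2 with hB
        have hx2 : ‖x‖^2 ≤ 1 := by nlinarith [norm_nonneg x]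
        have hBnn : 0 ≤ B := by
          rw [hB]; apply mul_nonneg (by linarith) (by positivity)
        have hptb : ∀ θ : ℝ, ‖(2 * (Real.pi:ℂ))⁻¹ * (poissonK x θ : ℂ)
              * (f (circleMap 0 1 θ) - f w)‖
            ≤ (2*Real.pi)⁻¹ * ((ε/2) * poissonK x θ + (2*M) * B) := by
          intro θ
          have hPnn := poissonK_nonneg x hxb θ
          have hn1 : ‖(2 * (Real.pi:ℂ))⁻¹‖ = (2*Real.pi)⁻¹ := by
            rw [norm_inv]
            rw [show (2 * (Real.pi:ℂ)) = ((2*Real.pi : ℝ) : ℂ) by push_cast; ring]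
            rw [Complex.norm_real, Real.norm_eq_abs, abs_of_pos (by positivity)]
          have hn2 : ‖((poissonK x θ : ℝ) : ℂ)‖ = poissonK x θ := by
            rw [Complex.norm_real, Real.norm_eq_abs, abs_of_nonneg hPnn]
          rw [norm_mul, norm_mul, hn1, hn2, mul_assoc]
          apply mul_le_mul_of_nonneg_left ?_ (by positivity)
          by_cases hnear : dist (circleMap 0 1 θ) w < δ₁
          · have h1 : ‖f (circleMap 0 1 θ) - f w‖ ≤ ε/2 := by
              have := hδ₁ (circleMap_mem_sphere 0 zero_le_one θ) hnear
              rw [dist_eq_norm] at this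
              linarith
            nlinarith [mul_le_mul_of_nonneg_left h1 hPnn, mul_nonneg hM0 hBnn]
          · push_neg at hnear
            have hfar : δ₁/2 ≤ dist (circleMap 0 1 θ) x := by
              have htri := dist_triangle (circleMap 0 1 θ) x w
              linarith
            have hcne := circleMap_sub_ne x hxb θ
            have hden : 0 < ‖circleMap 0 1 θ - x‖^2 := by
              have : 0 < ‖circleMap 0 1 θ - x‖ := norm_pos_iff.2 hcne
              positivity
            have hPle : poissonK x θ ≤ B := by
              rw [poissonK, hB, div_le_iff₀ hden]
              have hd2 : (δ₁/2)^2 ≤ ‖circleMap 0 1 θ - x‖^2 := by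
                rw [dist_eq_norm] at hfar
                nlinarith [norm_nonneg (circleMap 0 1 θ - x)]
              have hδeq : (2/δ₁)^2 * (δ₁/2)^2 = 1 := by field_simp
              nlinarith [mul_le_mul_of_nonneg_left hd2
                (mul_nonneg (by linarith : (0:ℝ) ≤ 1 - ‖x‖^2) (by positivity : (0:ℝ) ≤ (2/δ₁)^2))]
            have hΔ : ‖f (circleMap 0 1 θ) - f w‖ ≤ 2*M := by
              calc ‖f (circleMap 0 1 θ) - f w‖
                  ≤ ‖f (circleMap 0 1 θ)‖ + ‖f w‖ := norm_sub_le _ _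
                _ ≤ M + M := add_le_add (hM _ (circleMap_mem_sphere 0 zero_le_one θ)) (hM _ hws)
                _ = 2*M := by ring
            nlinarith [mul_le_mul hPle hΔ (norm_nonneg (f (circleMap 0 1 θ) - f w)) hBnn,
              mul_nonneg (le_of_lt (half_pos hε)) hPnn]
        have hbd : dist (F₀ x) (f w) ≤ ε/2 + (2*M)*B := by
          rw [dist_eq_norm, hsub]
          have h1 := intervalIntegral.norm_integral_le_integral_norm
            (μ := MeasureTheory.volume)
            (f := fun θ => (2 * (Real.pi:ℂ))⁻¹ * (poissonK x θ : ℂ)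
              * (f (circleMap 0 1 θ) - f w)) (by positivity : (0:ℝ) ≤ 2*Real.pi)
          have h2 : (∫ θ in (0:ℝ)..(2*Real.pi), ‖(2 * (Real.pi:ℂ))⁻¹ * (poissonK x θ : ℂ)
                * (f (circleMap 0 1 θ) - f w)‖)
              ≤ ∫ θ in (0:ℝ)..(2*Real.pi), (2*Real.pi)⁻¹ * ((ε/2) * poissonK x θ + (2*M) * B) := by
            apply intervalIntegral.integral_mono_on (by positivity)
            · apply Continuous.intervalIntegrable
              exact ((continuous_const.mul (Complex.continuous_ofReal.comp hPc)).mul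
                (hfc.sub continuous_const)).norm
            · apply Continuous.intervalIntegrable
              exact continuous_const.mul ((continuous_const.mul hPc).add continuous_const)
            · exact fun θ _ => hptb θ
          have h3 : (∫ θ in (0:ℝ)..(2*Real.pi),
                (2*Real.pi)⁻¹ * ((ε/2) * poissonK x θ + (2*M) * B)) = ε/2 + (2*M)*B := by
            rw [intervalIntegral.integral_const_mul,
              intervalIntegral.integral_add (f := fun θ => ε/2 * poissonK x θ) ((continuous_const.mul hPc).intervalIntegrable _ _)
                intervalIntegrable_const,
              intervalIntegral.integral_const_mul, hmass, intervalIntegral.integral_const]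
            have hπ' : (0:ℝ) < Real.pi := Real.pi_pos
            field_simp
            ring
          linarith
        have hxw : 1 - ‖x‖ ≤ dist x w := by
          have h5 := norm_sub_norm_le w x
          rw [hwn] at h5
          rw [dist_eq_norm, ← norm_sub_rev]
          linarith
        have h1x2 : 1 - ‖x‖^2 ≤ 2 * dist x w := by
          nlinarith [norm_nonneg x]
        have hBle : B ≤ 2 * dist x w * (2/δ₁)^2 := by
          rw [hB]
          exact mul_le_mul_of_nonneg_right h1x2 (by positivity)
        have hdnn : (0:ℝ) ≤ dist x w := dist_nonneg
        have hfin : (2*M) * B < ε/2 := by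
          have h6 : (2*M) * B ≤ (2*M) * (2 * dist x w * (2/δ₁)^2) :=
            mul_le_mul_of_nonneg_left hBle (by positivity)
          have h7 : dist x w * (64 * (M+1)) < ε * δ₁^2 := by
            rw [lt_div_iff₀ (by positivity)] at hdx3
            exact hdx3
          have h8 : (2*M) * (2 * dist x w * (2/δ₁)^2) = 16 * M * dist x w / δ₁^2 := by
            field_simp
            ring
          have h9 : 16 * M * dist x w / δ₁^2 < ε/2 := by
            rw [div_lt_iff₀ (by positivity)]
            nlinarith
          linarith
        calc dist (F₀ x) (f w) ≤ ε/2 + (2*M)*B := hbd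
          _ < ε := by linarith
      · -- x on the sphere
        have hxs : x ∈ sphere (0:ℂ) 1 := by
          rw [mem_closedBall_zero_iff] at hx
          rw [mem_sphere_zero_iff_norm]
          push_neg at hxb
          linarith
        have : F x = f x := hFeq x hxs
        rw [this]
        have := hδ₁ hxs (by linarith : dist x w < δ₁)
        linarith
  · -- differentiability
    have hd0 : DifferentiableOn ℂ F₀ (ball 0 1) :=
      fun w hw => (han w hw).differentiableAt.differentiableWithinAt
    exact hd0.congr (fun x hx => by simp only [hF, if_pos (mem_ball_zero_iff.1 hx)])
end

section
/- Fix a natural number n ≥ 2 and define f(z) = z^n + 1/(2z) for z on the unit circle. Then for every polynomial P of degree at most n − 1 such that f + P is nonvanishing on the unit circle, the winding number of f + P around 0 is nonnegative, yet f does not extend holomorphically through the open unit disc. -/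
open Polynomial Metric
open scoped Classical

/-! ### Auxiliary lemmas -/

lemma int_valued_const {c : ℝ → ℝ} (hc : Continuous c)
    (h : ∀ θ, ∃ k : ℤ, c θ = k) (a b : ℝ) : c a = c b := by
  by_contra hne
  obtain ⟨ka, hka⟩ := h a
  obtain ⟨kb, hkb⟩ := h b
  have hmem : min (c a) (c b) + 1/2 ∈ Set.uIcc (c a) (c b) := by
    rcases le_total (c a) (c b) with hle | hle
    · have : (ka:ℝ) + 1 ≤ kb := by
        have : ka < kb := by
          have := lt_of_le_of_ne hle (hne)
          rw [hka, hkb] at this; exact_mod_cast this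
        exact_mod_cast Int.add_one_le_iff.mpr this
      rw [Set.uIcc_of_le hle, min_eq_left hle]
      constructor <;> [linarith; rw [hka, hkb]] <;> linarith
    · have : (kb:ℝ) + 1 ≤ ka := by
        have : kb < ka := by
          have := lt_of_le_of_ne hle (Ne.symm hne)
          rw [hka, hkb] at this; exact_mod_cast this
        exact_mod_cast Int.add_one_le_iff.mpr this
      rw [Set.uIcc_of_ge hle, min_eq_right hle]
      constructor <;> [linarith; rw [hka, hkb]] <;> linarith
  obtain ⟨θ, _, hθ⟩ := intermediate_value_uIcc (f := c) (a := a) (b := b)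
    hc.continuousOn hmem
  obtain ⟨k, hk⟩ := h θ
  rw [hk] at hθ
  rcases le_total (c a) (c b) with hle | hle
  · rw [min_eq_left hle, hka] at hθ
    have : (2*(k - ka) : ℤ) = (1:ℤ) := by exact_mod_cast (by push_cast; linarith : ((2*(k-ka):ℤ):ℝ) = 1)
    omega
  · rw [min_eq_right hle, hkb] at hθ
    have : (2*(k - kb) : ℤ) = (1:ℤ) := by exact_mod_cast (by push_cast; linarith : ((2*(k-kb):ℤ):ℝ) = 1)
    omega

lemma winding_unique {g : ℂ → ℂ} {m m' : ℤ}
    (hg : ∀ θ : ℝ, g (Complex.exp (θ * Complex.I)) ≠ 0)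
    (h1 : HasWindingNumber g m) (h2 : HasWindingNumber g m') : m = m' := by
  obtain ⟨α, hαc, hα, hαw⟩ := h1
  obtain ⟨β, hβc, hβ, hβw⟩ := h2
  have key : ∀ θ, ∃ k : ℤ, (α θ - β θ) / (2 * Real.pi) = k := by
    intro θ
    have hne : (‖g (Complex.exp (θ * Complex.I))‖ : ℂ) ≠ 0 := by
      simpa using norm_ne_zero_iff.mpr (hg θ)
    have heq : Complex.exp (α θ * Complex.I) = Complex.exp (β θ * Complex.I) := by
      have := (hα θ).symm.trans (hβ θ)
      exact mul_left_cancel₀ hne this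
    rw [Complex.exp_eq_exp_iff_exists_int] at heq
    obtain ⟨k, hk⟩ := heq
    refine ⟨k, ?_⟩
    have h0 : ((α θ - β θ - k * (2 * Real.pi) : ℝ) : ℂ) * Complex.I = 0 := by
      push_cast
      linear_combination hk
    rcases mul_eq_zero.mp h0 with h | h
    swap
    · exact absurd h Complex.I_ne_zero
    have hr : α θ - β θ = k * (2 * Real.pi) := by
      have : (α θ - β θ - k * (2 * Real.pi) : ℝ) = 0 := by exact_mod_cast h
      linarith
    rw [hr]
    field_simp
  have hc : Continuous fun θ => (α θ - β θ) / (2 * Real.pi) :=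
    (hαc.sub hβc).div_const _
  have := int_valued_const hc key (2 * Real.pi) 0
  have hπ : (2 * Real.pi) ≠ 0 := by positivity
  have : α (2*Real.pi) - β (2*Real.pi) = α 0 - β 0 := by
    field_simp at this; linarith
  have : (m : ℝ) * (2*Real.pi) = m' * (2*Real.pi) := by rw [← hαw, ← hβw]; linarith
  exact_mod_cast mul_right_cancel₀ hπ this

lemma one_le_multiset_prod (s : Multiset ℝ) (h : ∀ x ∈ s, (1:ℝ) ≤ x) : 1 ≤ s.prod := by
  induction s using Multiset.induction_on with
  | empty => simp
  | cons x s ih =>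
    rw [Multiset.prod_cons]
    have hx := h x (Multiset.mem_cons_self x s)
    have hs := ih (fun y hy => h y (Multiset.mem_cons_of_mem hy))
    nlinarith

lemma norm_eq_mul_exp_arg (c : ℂ) : c = (‖c‖ : ℂ) * Complex.exp (c.arg * Complex.I) := by
  exact (Complex.norm_mul_exp_arg_mul_I c).symm

lemma re_pos_of_small {w : ℂ} (hw : ‖w‖ < 1) : 0 < (1 - w).re := by
  have : w.re ≤ ‖w‖ := by
    calc w.re ≤ |w.re| := le_abs_self _
    _ ≤ ‖w‖ := Complex.abs_re_le_norm w
  simp only [Complex.sub_re, Complex.one_re]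
  linarith [this.trans_lt hw]

lemma norm_exp_mul_I (θ : ℝ) : ‖Complex.exp ((θ:ℂ) * Complex.I)‖ = 1 := by
  rw [Complex.norm_exp]
  simp

lemma arg_cont {u : ℝ → ℂ} (hu : Continuous u) (hre : ∀ θ, 0 < (u θ).re) :
    Continuous fun θ => (u θ).arg := by
  rw [continuous_iff_continuousAt]
  intro θ
  exact (Complex.continuousAt_arg (Or.inl (hre θ))).comp hu.continuousAt

lemma lift_factor (r : ℂ) (hr : ‖r‖ ≠ 1) :
    ∃ α : ℝ → ℝ, Continuous α ∧
      (∀ θ : ℝ, Complex.exp (θ * Complex.I) - r =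
        (‖Complex.exp (θ * Complex.I) - r‖ : ℂ) * Complex.exp (α θ * Complex.I)) ∧
      α (2 * Real.pi) - α 0 = if ‖r‖ < 1 then 2 * Real.pi else 0 := by
  have hexpn : ∀ θ : ℝ, ‖Complex.exp (-(θ:ℂ) * Complex.I)‖ = 1 := by
    intro θ
    rw [Complex.norm_exp]
    simp
  rcases lt_or_gt_of_ne hr with hlt | hgt
  · -- root inside: α θ = θ + arg (1 - r e^{-iθ})
    set w : ℝ → ℂ := fun θ => 1 - r * Complex.exp (-(θ : ℂ) * Complex.I) with hwdef
    have hwre : ∀ θ, 0 < (w θ).re := by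
      intro θ
      apply re_pos_of_small
      rw [norm_mul, hexpn θ, mul_one]
      exact hlt
    have hwcont : Continuous w := by
      have h1 : Continuous fun θ : ℝ => Complex.exp (-(θ:ℂ) * Complex.I) :=
        Complex.continuous_exp.comp ((Complex.continuous_ofReal.neg).mul continuous_const)
      exact continuous_const.sub (continuous_const.mul h1)
    have hfac : ∀ θ : ℝ, Complex.exp ((θ:ℂ) * Complex.I) - r =
        Complex.exp ((θ:ℂ) * Complex.I) * w θ := by
      intro θ
      simp only [w]
      rw [mul_sub, mul_one, ← mul_assoc, mul_comm (Complex.exp _) r, mul_assoc,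
        ← Complex.exp_add]
      simp
    have hnorm : ∀ θ : ℝ, ‖Complex.exp ((θ:ℂ) * Complex.I) - r‖ = ‖w θ‖ := by
      intro θ
      rw [hfac θ, norm_mul, norm_exp_mul_I, one_mul]
    refine ⟨fun θ => θ + (w θ).arg, continuous_id.add (arg_cont hwcont hwre), ?_, ?_⟩
    · intro θ
      rw [hnorm θ, hfac θ]
      push_cast
      rw [add_mul, Complex.exp_add, ← mul_assoc, mul_comm ((‖w θ‖:ℂ)) _, mul_assoc]
      congr 1
      exact norm_eq_mul_exp_arg (w θ)
    · rw [if_pos hlt]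
      have h20 : w (2 * Real.pi) = w 0 := by
        simp only [w]
        congr 1
        push_cast
        rw [neg_mul, Complex.exp_neg, Complex.exp_two_pi_mul_I]
        simp
      show 2*Real.pi + (w (2*Real.pi)).arg - (0 + (w 0).arg) = 2*Real.pi
      rw [h20]
      ring
  · -- root outside: α θ = arg (-r) + arg (1 - e^{iθ} / r)
    have hr0 : r ≠ 0 := by
      intro h; rw [h] at hgt; norm_num at hgt
    set w : ℝ → ℂ := fun θ => 1 - Complex.exp ((θ : ℂ) * Complex.I) * r⁻¹ with hwdef
    have hwre : ∀ θ, 0 < (w θ).re := by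
      intro θ
      apply re_pos_of_small
      rw [norm_mul, norm_exp_mul_I, one_mul, norm_inv]
      rw [inv_lt_one_iff₀]
      right; exact hgt
    have hwcont : Continuous w := by
      have h1 : Continuous fun θ : ℝ => Complex.exp ((θ:ℂ) * Complex.I) :=
        Complex.continuous_exp.comp (Complex.continuous_ofReal.mul continuous_const)
      exact continuous_const.sub (h1.mul continuous_const)
    have hfac : ∀ θ : ℝ, Complex.exp ((θ:ℂ) * Complex.I) - r = (-r) * w θ := by
      intro θ
      simp only [w]
      field_simp
      ring
    have hnorm : ∀ θ : ℝ, ‖Complex.exp ((θ:ℂ) * Complex.I) - r‖ = ‖r‖ * ‖w θ‖ := by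
      intro θ
      rw [hfac θ, norm_mul, norm_neg]
    refine ⟨fun θ => (-r).arg + (w θ).arg, continuous_const.add (arg_cont hwcont hwre), ?_, ?_⟩
    · intro θ
      rw [hnorm θ, hfac θ]
      conv_lhs => rw [norm_eq_mul_exp_arg (-r), norm_eq_mul_exp_arg (w θ)]
      rw [norm_neg]
      push_cast
      rw [add_mul, Complex.exp_add]
      ring
    · rw [if_neg (not_lt.mpr hgt.le)]
      have h20 : w (2 * Real.pi) = w 0 := by
        simp only [w]
        congr 1
        push_cast
        rw [Complex.exp_two_pi_mul_I]
        simp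
      show (-r).arg + (w (2*Real.pi)).arg - ((-r).arg + (w 0).arg) = 0
      rw [h20]
      ring

lemma lift_multiset (s : Multiset ℂ) : (∀ r ∈ s, ‖r‖ ≠ 1) →
    ∃ α : ℝ → ℝ, Continuous α ∧
      (∀ θ : ℝ, (s.map (fun r => Complex.exp ((θ:ℝ) * Complex.I) - r)).prod =
        (‖(s.map (fun r => Complex.exp ((θ:ℝ) * Complex.I) - r)).prod‖ : ℂ) *
          Complex.exp (α θ * Complex.I)) ∧
      α (2 * Real.pi) - α 0 =
        ((s.filter (fun r => ‖r‖ < 1)).card : ℝ) * (2 * Real.pi) := by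
  induction s using Multiset.induction_on with
  | empty =>
    intro _
    exact ⟨fun _ => 0, continuous_const, fun θ => by simp, by simp⟩
  | cons r s ih =>
    intro hs
    have hr := hs r (Multiset.mem_cons_self r s)
    obtain ⟨β, hβc, hβ, hβw⟩ := ih (fun x hx => hs x (Multiset.mem_cons_of_mem hx))
    obtain ⟨γ, hγc, hγ, hγw⟩ := lift_factor r hr
    refine ⟨fun θ => γ θ + β θ, hγc.add hβc, ?_, ?_⟩
    · intro θ
      rw [Multiset.map_cons, Multiset.prod_cons, norm_mul]
      push_cast
      rw [add_mul, Complex.exp_add]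
      conv_lhs => rw [hγ θ, hβ θ]
      ring
    · show γ (2*Real.pi) + β (2*Real.pi) - (γ 0 + β 0) = _
      rw [Multiset.filter_cons]
      have : γ (2*Real.pi) + β (2*Real.pi) - (γ 0 + β 0) =
          (γ (2*Real.pi) - γ 0) + (β (2*Real.pi) - β 0) := by ring
      rw [this, hγw, hβw]
      split_ifs with h
      · simp [Multiset.card_add]
        ring
      · simp

theorem stmt11 (n : ℕ) (hn : 2 ≤ n) :
    (∀ P : Polynomial ℂ, P.natDegree ≤ n - 1 →
      (∀ z ∈ sphere (0:ℂ) 1, z ^ n + 1 / (2 * z) + P.eval z ≠ 0) →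
      ∀ m : ℤ, HasWindingNumber (fun z => z ^ n + 1 / (2 * z) + P.eval z) m → 0 ≤ m) ∧
    ¬ ExtendsHolo (fun z => z ^ n + 1 / (2 * z)) := by
  constructor
  · -- Part 1
    intro P hPdeg hP m hm
    set g : ℂ[X] := X ^ (n+1) + (C (1/2 : ℂ) + X * P) with hgdef
    set q : ℂ[X] := C (1/2 : ℂ) + X * P with hq
    have hqdeg : q.degree < ((n+1 : ℕ) : WithBot ℕ) := by
      apply lt_of_le_of_lt (Polynomial.degree_add_le _ _)
      apply max_lt
      · exact lt_of_le_of_lt Polynomial.degree_C_le (by exact_mod_cast Nat.succ_pos n)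
      · apply lt_of_le_of_lt (Polynomial.degree_mul_le _ _)
        have hPd : P.degree ≤ ((n-1 : ℕ) : WithBot ℕ) :=
          Polynomial.degree_le_of_natDegree_le hPdeg
        calc (X : ℂ[X]).degree + P.degree ≤ 1 + ((n-1:ℕ) : WithBot ℕ) :=
              add_le_add (le_of_eq Polynomial.degree_X) hPd
          _ < ((n+1:ℕ) : WithBot ℕ) := by
              have h1 : (1 : WithBot ℕ) = ((1:ℕ) : WithBot ℕ) := rfl
              rw [h1, ← Nat.cast_add]
              exact_mod_cast (by omega : 1 + (n-1) < n + 1)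
    have hmono : g.Monic := Polynomial.monic_X_pow_add (by exact_mod_cast hqdeg)
    have hsplit : g.Splits := IsAlgClosed.splits g
    have heval : ∀ v : ℂ, g.eval v = (g.roots.map fun a => v - a).prod := by
      intro v
      rw [hsplit.eval_eq_prod_roots, hmono.leadingCoeff, one_mul]
    have hgeval : ∀ v : ℂ, g.eval v = v^(n+1) + (1/2 + v * P.eval v) := by
      intro v; simp [g]
    have hroots_ne : ∀ a ∈ g.roots, ‖a‖ ≠ 1 := by
      intro a ha h1
      have ha0 : a ≠ 0 := by intro h; rw [h] at h1; simp at h1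
      have hasph : a ∈ sphere (0:ℂ) 1 := by
        rw [mem_sphere_zero_iff_norm]; exact h1
      apply hP a hasph
      have hroot : g.eval a = 0 := by
        have := Polynomial.isRoot_of_mem_roots ha
        exact this
      have key : a * (a^n + 1/(2*a) + P.eval a) = g.eval a := by
        rw [hgeval]; field_simp; ring
      rcases mul_eq_zero.mp (key.trans hroot) with h | h
      · exact absurd h ha0
      · exact h
    have hprodnorm : ((g.roots.map fun a => ‖a‖)).prod = 1/2 := by
      have h0 : g.eval 0 = 1/2 := by
        rw [hgeval]; simp
      have h1 : ((g.roots.map fun a => (0:ℂ) - a)).prod = 1/2 := (heval 0).symm.trans h0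
      have h2 := congrArg (normHom : ℂ →*₀ ℝ) h1
      rw [map_multiset_prod, Multiset.map_map] at h2
      simp only [Function.comp, zero_sub, normHom_apply, norm_neg] at h2
      rw [h2]
      simp
    have hexists : ∃ a ∈ g.roots, ‖a‖ < 1 := by
      by_contra hcon
      push_neg at hcon
      have hall : ∀ x ∈ g.roots.map (fun a => ‖a‖), (1:ℝ) ≤ x := by
        intro x hx
        obtain ⟨a, ha, rfl⟩ := Multiset.mem_map.mp hx
        have h1 := hcon a ha
        have h2 := hroots_ne a ha
        exact lt_of_le_of_ne h1 (Ne.symm h2) |>.le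
      have hge : (1:ℝ) ≤ ((g.roots.map fun a => ‖a‖)).prod :=
        one_le_multiset_prod _ hall
      rw [hprodnorm] at hge
      norm_num at hge
    set c : ℕ := (g.roots.filter (fun r => ‖r‖ < 1)).card with hcdef
    have hc1 : 1 ≤ c := by
      obtain ⟨a, ha, hlt⟩ := hexists
      exact Multiset.card_pos_iff_exists_mem.mpr ⟨a, Multiset.mem_filter.mpr ⟨ha, hlt⟩⟩
    obtain ⟨β, hβc, hβ, hβw⟩ := lift_multiset g.roots hroots_ne
    have hfP_ne : ∀ θ : ℝ, (fun z => z ^ n + 1 / (2 * z) + P.eval z)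
        (Complex.exp ((θ:ℝ) * Complex.I)) ≠ 0 := by
      intro θ
      apply hP
      rw [mem_sphere_zero_iff_norm]
      exact norm_exp_mul_I θ
    have hwind : HasWindingNumber (fun z => z ^ n + 1 / (2 * z) + P.eval z) ((c:ℤ) - 1) := by
      refine ⟨fun θ => β θ - θ, hβc.sub continuous_id, ?_, ?_⟩
      · intro θ
        set e : ℂ := Complex.exp ((θ:ℝ) * Complex.I) with hedef
        have he0 : e ≠ 0 := Complex.exp_ne_zero _
        have hfPe : e ^ n + 1 / (2 * e) + P.eval e = e⁻¹ * g.eval e := by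
          rw [hgeval]; field_simp; ring
        show e ^ n + 1 / (2 * e) + P.eval e =
          (‖e ^ n + 1 / (2 * e) + P.eval e‖ : ℂ) *
            Complex.exp (((β θ - θ : ℝ) : ℂ) * Complex.I)
        rw [hfPe, heval e]
        have hne : ‖e⁻¹ * (g.roots.map fun a => e - a).prod‖ =
            ‖(g.roots.map fun a => e - a).prod‖ := by
          rw [norm_mul, norm_inv, hedef, norm_exp_mul_I]
          simp
        rw [hne]
        have hprodeq : (g.roots.map fun a => e - a).prod =
            (‖(g.roots.map fun a => e - a).prod‖ : ℂ) * Complex.exp (β θ * Complex.I) := hβ θ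
        conv_lhs => rw [hprodeq]
        push_cast
        rw [sub_mul, Complex.exp_sub]
        rw [hedef]
        field_simp [Complex.exp_ne_zero]
      · show β (2*Real.pi) - 2*Real.pi - (β 0 - 0) = ((c:ℤ) - 1 : ℤ) * (2*Real.pi)
        have : β (2*Real.pi) - β 0 = (c:ℝ) * (2*Real.pi) := hβw
        push_cast
        linarith
    have hmc : m = (c:ℤ) - 1 := winding_unique hfP_ne hm hwind
    rw [hmc]
    omega
  · -- Part 2
    rintro ⟨F, hFc, hFd, hFeq⟩
    set G : ℂ → ℂ := fun z => z * F z - z ^ (n + 1) - 1 / 2 with hG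
    have hGd : DiffContOnCl ℂ G (ball 0 1) := by
      constructor
      · exact (differentiableOn_id.mul hFd).sub
          ((differentiable_pow (n+1)).differentiableOn) |>.sub (differentiableOn_const _)
      · rw [closure_ball (0:ℂ) one_ne_zero]
        exact ((continuousOn_id.mul hFc).sub
          ((continuous_pow (n+1)).continuousOn)).sub continuousOn_const
    have hfront : Set.EqOn G 0 (frontier (ball (0:ℂ) 1)) := by
      rw [frontier_ball (0:ℂ) one_ne_zero]
      intro z hz
      have hz1 : ‖z‖ = 1 := by simpa using hz
      have hz0 : z ≠ 0 := by intro h; rw [h] at hz1; simp at hz1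
      have := hFeq z hz
      simp only [G, this, Pi.zero_apply]
      field_simp
      ring
    have hzero : Set.EqOn G 0 (ball (0:ℂ) 1) :=
      Complex.eqOn_of_eqOn_frontier isBounded_ball hGd
        (differentiableOn_const 0).diffContOnCl hfront
    have h0 : G 0 = 0 := hzero (by simp)
    simp [G, zero_pow (Nat.succ_ne_zero n)] at h0
end

section
/- For every natural number n₀ there exists a continuous function f on the unit circle such that: (a) for every polynomial P of degree ≤ n₀ with f + P nonvanishing on the unit circle, the winding number of f + P around 0 is nonnegative; and (b) f does not extend continuously to the closed unit disc as a function holomorphic on the open unit disc. -/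
open Polynomial Metric
open scoped Classical

section Stmt12Helpers

open Complex

/-- `α` is a continuous argument lift for `g : ℝ → ℂ`. -/
def WindLift (g : ℝ → ℂ) (α : ℝ → ℝ) : Prop :=
  Continuous α ∧ ∀ θ : ℝ, g θ = (‖g θ‖ : ℂ) * Complex.exp (α θ * I)

theorem WindLift.mul {g h : ℝ → ℂ} {α β : ℝ → ℝ} (hg : WindLift g α) (hh : WindLift h β) :
    WindLift (fun θ => g θ * h θ) (α + β) := by
  refine ⟨hg.1.add hh.1, fun θ => ?_⟩
  simp only [Pi.add_apply, norm_mul]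
  push_cast
  rw [add_mul, Complex.exp_add]
  calc g θ * h θ = ((‖g θ‖ : ℂ) * Complex.exp (α θ * I)) * ((‖h θ‖ : ℂ) * Complex.exp (β θ * I)) := by
        rw [← hg.2 θ, ← hh.2 θ]
    _ = _ := by ring

theorem windlift_unique {g : ℝ → ℂ} {α β : ℝ → ℝ} (hg : ∀ θ, g θ ≠ 0)
    (hα : WindLift g α) (hβ : WindLift g β) :
    α (2 * Real.pi) - α 0 = β (2 * Real.pi) - β 0 := by
  have key : ∀ θ, ∃ n : ℤ, α θ - β θ = n * (2 * Real.pi) := by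
    intro θ
    have h1 := (hα.2 θ).symm.trans (hβ.2 θ)
    have hn : (‖g θ‖ : ℂ) ≠ 0 := by simpa using (hg θ)
    have h2 : Complex.exp (α θ * I) = Complex.exp (β θ * I) :=
      mul_left_cancel₀ hn h1
    have h3 : Complex.exp ((α θ - β θ : ℝ) * I) = 1 := by
      push_cast
      rw [sub_mul, Complex.exp_sub, h2, div_self (Complex.exp_ne_zero _)]
    rw [Complex.exp_eq_one_iff] at h3
    obtain ⟨n, hn2⟩ := h3
    refine ⟨n, ?_⟩
    have : ((α θ - β θ : ℝ) : ℂ) = (n : ℂ) * (2 * Real.pi) := by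
      have hI : (I : ℂ) ≠ 0 := I_ne_zero
      apply mul_right_cancel₀ hI
      rw [hn2]; ring
    exact_mod_cast this
  set h : ℝ → ℝ := fun θ => α θ - β θ with hh
  have hc : Continuous h := hα.1.sub hβ.1
  have heq : h (2 * Real.pi) = h 0 := by
    by_contra hne
    obtain ⟨n, hn⟩ := key 0
    obtain ⟨m, hm⟩ := key (2 * Real.pi)
    have hπ : (0:ℝ) < 2 * Real.pi := by positivity
    have hmn : m ≠ n := by
      intro he
      exact hne (by simp only [hh]; rw [hm, hn, he])
    set μ : ℤ := min m n
    set M : ℤ := max m n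
    have hμM : μ + 1 ≤ M := by omega
    have hmem : ((μ:ℝ) + 1/2) * (2 * Real.pi) ∈ Set.uIcc (h 0) (h (2 * Real.pi)) := by
      have h0 : h 0 = (n:ℝ) * (2*Real.pi) := hn
      have h2 : h (2*Real.pi) = (m:ℝ) * (2*Real.pi) := hm
      rw [h0, h2, Set.mem_uIcc]
      rcases le_total m n with hle | hle
      · right
        constructor
        · have h4 : (μ:ℝ) = (m:ℝ) := by exact_mod_cast (min_eq_left hle)
          nlinarith
        · have : (μ:ℝ) + 1 ≤ (n:ℝ) := by exact_mod_cast (by omega : μ + 1 ≤ n)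
          nlinarith
      · left
        constructor
        · have h4 : (μ:ℝ) = (n:ℝ) := by exact_mod_cast (min_eq_right hle)
          nlinarith
        · have : (μ:ℝ) + 1 ≤ (m:ℝ) := by exact_mod_cast (by omega : μ + 1 ≤ m)
          nlinarith
    have := intermediate_value_uIcc (a := (0:ℝ)) (b := 2*Real.pi) (f := h) hc.continuousOn
    obtain ⟨t, _, ht⟩ := this hmem
    obtain ⟨k, hk⟩ := key t
    have : ((μ:ℝ) + 1/2) * (2 * Real.pi) = (k:ℝ) * (2 * Real.pi) := by
      rw [← ht]; exact hk
    have h5 : (μ:ℝ) + 1/2 = (k:ℝ) := by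
      have := mul_right_cancel₀ (ne_of_gt hπ) this
      linarith
    have h6 : (2*μ + 1 : ℝ) = (2*k : ℝ) := by push_cast; linarith
    have : (2*μ + 1 : ℤ) = 2*k := by exact_mod_cast h6
    omega
  simp only [hh] at heq
  linarith

theorem WindLift.congr {g g' : ℝ → ℂ} {α : ℝ → ℝ} (h : ∀ θ, g θ = g' θ) (hg : WindLift g α) :
    WindLift g' α := by
  refine ⟨hg.1, fun θ => ?_⟩
  rw [← h θ]; exact hg.2 θ

theorem windlift_exp : WindLift (fun θ : ℝ => Complex.exp (θ * I)) id := by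
  refine ⟨continuous_id, fun θ => ?_⟩
  simp [Complex.norm_exp_ofReal_mul_I]

theorem windlift_exp_neg : WindLift (fun θ : ℝ => Complex.exp (-(θ * I))) (fun θ => -θ) := by
  refine ⟨continuous_neg, fun θ => ?_⟩
  have : ((-θ : ℝ) : ℂ) * I = -((θ:ℝ) * I) := by push_cast; ring
  rw [this]
  have h1 : ‖Complex.exp (-((θ:ℝ) * I))‖ = 1 := by
    have : -((θ:ℝ) * I) = ((-θ : ℝ):ℂ) * I := by push_cast; ring
    rw [this, Complex.norm_exp_ofReal_mul_I]
  rw [h1]; simp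

theorem windlift_const {c : ℂ} (hc : c ≠ 0) : WindLift (fun _ : ℝ => c) (fun _ => Complex.arg c) := by
  refine ⟨continuous_const, fun θ => ?_⟩
  rw [Complex.norm_mul_exp_arg_mul_I]

theorem windlift_arg {v : ℝ → ℂ} (hv : Continuous v) (hre : ∀ θ, 0 < (v θ).re) :
    WindLift v (fun θ => Complex.arg (v θ)) := by
  refine ⟨?_, fun θ => ?_⟩
  · rw [continuous_iff_continuousAt]
    intro θ
    exact (Complex.continuousAt_arg (Or.inl (hre θ))).comp hv.continuousAt
  · rw [Complex.norm_mul_exp_arg_mul_I]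

theorem exp_two_pi_I : Complex.exp ((((2*Real.pi:ℝ)):ℂ)*I) = 1 := by
  push_cast; exact Complex.exp_two_pi_mul_I

theorem exp_neg_two_pi_I : Complex.exp (-((((2*Real.pi:ℝ)):ℂ)*I)) = 1 := by
  rw [Complex.exp_neg, exp_two_pi_I]; norm_num

theorem windlift_factor {a : ℂ} (ha : ‖a‖ ≠ 1) :
    ∃ α : ℝ → ℝ, WindLift (fun θ => Complex.exp ((θ:ℝ) * I) - a) α ∧
      α (2 * Real.pi) - α 0 = if ‖a‖ < 1 then 2 * Real.pi else 0 := by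
  rcases lt_or_gt_of_ne ha with hlt | hgt
  · -- inside root
    set w : ℝ → ℂ := fun θ => 1 - a * Complex.exp (-((θ:ℝ) * I)) with hw
    have hwc : Continuous w := by fun_prop
    have hwre : ∀ θ, 0 < (w θ).re := by
      intro θ
      have hnorm : ‖a * Complex.exp (-((θ:ℝ) * I))‖ < 1 := by
        rw [norm_mul]
        have : ‖Complex.exp (-((θ:ℝ) * I))‖ = 1 := by
          have : -((θ:ℝ) * I) = ((-θ : ℝ):ℂ) * I := by push_cast; ring
          rw [this, Complex.norm_exp_ofReal_mul_I]
        rw [this, mul_one]; exact hlt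
      have h1 : (a * Complex.exp (-((θ:ℝ) * I))).re < 1 :=
        lt_of_le_of_lt (le_trans (le_abs_self _) (Complex.abs_re_le_norm _)) hnorm
      simp only [hw, Complex.sub_re, Complex.one_re]
      linarith
    have hlift := windlift_exp.mul (windlift_arg hwc hwre)
    refine ⟨_, hlift.congr ?_, ?_⟩
    · intro θ
      have h1 : Complex.exp ((θ:ℝ)*I) * Complex.exp (-((θ:ℝ)*I)) = 1 := by
        rw [← Complex.exp_add]; simp
      calc Complex.exp ((θ:ℝ)*I) * w θ
          = Complex.exp ((θ:ℝ)*I) - (Complex.exp ((θ:ℝ)*I) * Complex.exp (-((θ:ℝ)*I))) * a := by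
            simp only [hw]; ring
        _ = _ := by rw [h1]; ring
    · have hper : w (2 * Real.pi) = w 0 := by
        simp only [hw, exp_neg_two_pi_I]
        norm_num
      simp only [Pi.add_apply, id_eq, hper, if_pos hlt]
      ring
  · -- outside root
    have ha0 : a ≠ 0 := by
      intro h; rw [h] at hgt; norm_num at hgt
    set w : ℝ → ℂ := fun θ => 1 - a⁻¹ * Complex.exp ((θ:ℝ) * I) with hw
    have hwc : Continuous w := by fun_prop
    have hwre : ∀ θ, 0 < (w θ).re := by
      intro θ
      have hnorm : ‖a⁻¹ * Complex.exp ((θ:ℝ) * I)‖ < 1 := by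
        rw [norm_mul, Complex.norm_exp_ofReal_mul_I, mul_one,
          norm_inv]
        rw [inv_lt_one_iff₀]
        right; exact hgt
      have h1 : (a⁻¹ * Complex.exp ((θ:ℝ) * I)).re < 1 :=
        lt_of_le_of_lt (le_trans (le_abs_self _) (Complex.abs_re_le_norm _)) hnorm
      simp only [hw, Complex.sub_re, Complex.one_re]
      linarith
    have hlift := (windlift_const (neg_ne_zero.mpr ha0)).mul (windlift_arg hwc hwre)
    refine ⟨_, hlift.congr ?_, ?_⟩
    · intro θ
      simp only [hw]
      field_simp
      ring
    · have hper : w (2 * Real.pi) = w 0 := by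
        simp only [hw, exp_two_pi_I]
        norm_num
      have hnl : ¬ (‖a‖ < 1) := not_lt.mpr (le_of_lt hgt)
      simp only [Pi.add_apply, hper, if_neg hnl]
      ring

open scoped Classical in
theorem windlift_multiset (s : Multiset ℂ) (hs : ∀ a ∈ s, ‖a‖ ≠ 1) :
    ∃ α : ℝ → ℝ, WindLift (fun θ => (s.map (fun a => Complex.exp ((θ:ℝ) * I) - a)).prod) α ∧
      α (2 * Real.pi) - α 0 = (s.countP (fun a => ‖a‖ < 1)) * (2 * Real.pi) := by
  induction s using Multiset.induction_on with
  | empty =>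
    refine ⟨fun _ => 0, ⟨continuous_const, fun θ => by simp⟩, by simp⟩
  | cons a s ih =>
    have ha : ‖a‖ ≠ 1 := hs a (Multiset.mem_cons_self a s)
    obtain ⟨α, hα, hαv⟩ := ih (fun b hb => hs b (Multiset.mem_cons_of_mem hb))
    obtain ⟨β, hβ, hβv⟩ := windlift_factor ha
    refine ⟨β + α, (hβ.mul hα).congr (fun θ => by rw [Multiset.map_cons, Multiset.prod_cons]), ?_⟩
    simp only [Pi.add_apply]
    rw [Multiset.countP_cons]
    by_cases h : ‖a‖ < 1
    · rw [if_pos h] at hβv ⊢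
      push_cast
      linarith
    · rw [if_neg h] at hβv ⊢
      push_cast
      linarith

theorem one_le_norm_prod (s : Multiset ℂ) (h : ∀ a ∈ s, 1 ≤ ‖a‖) : 1 ≤ ‖s.prod‖ := by
  induction s using Multiset.induction_on with
  | empty => simp
  | cons a s ih =>
    rw [Multiset.prod_cons, norm_mul]
    have h1 := h a (Multiset.mem_cons_self a s)
    have h2 := ih (fun b hb => h b (Multiset.mem_cons_of_mem hb))
    nlinarith

open Polynomial Metric in
open scoped Classical in
theorem stmt12' (n₀ : ℕ) :
    ∃ f : ℂ → ℂ, ContinuousOn f (sphere (0:ℂ) 1) ∧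
      (∀ P : Polynomial ℂ, P.natDegree ≤ n₀ →
        (∀ z ∈ sphere (0:ℂ) 1, f z + P.eval z ≠ 0) →
        ∀ m : ℤ, (∃ α : ℝ → ℝ, Continuous α ∧
          (∀ θ : ℝ, (f (Complex.exp (θ * Complex.I)) + P.eval (Complex.exp (θ * Complex.I))) =
            (‖f (Complex.exp (θ * Complex.I)) + P.eval (Complex.exp (θ * Complex.I))‖ : ℂ) *
              Complex.exp (α θ * Complex.I)) ∧
          α (2 * Real.pi) - α 0 = m * (2 * Real.pi)) → 0 ≤ m) ∧
      ¬ ∃ F : ℂ → ℂ, ContinuousOn F (closedBall 0 1) ∧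
          DifferentiableOn ℂ F (ball 0 1) ∧ ∀ z ∈ sphere (0:ℂ) 1, F z = f z := by
  set f : ℂ → ℂ := fun z => z^(n₀+1) + (1/2 : ℂ) * (starRingEnd ℂ) z with hf
  -- continuity
  have hfc : ContinuousOn f (sphere (0:ℂ) 1) := by
    apply Continuous.continuousOn
    exact ((continuous_pow _).add (continuous_const.mul Complex.continuous_conj))
  -- non-extendability
  have hnext : ¬ ∃ F : ℂ → ℂ, ContinuousOn F (closedBall 0 1) ∧
      DifferentiableOn ℂ F (ball 0 1) ∧ ∀ z ∈ sphere (0:ℂ) 1, F z = f z := by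
    rintro ⟨F, hFc, hFd, hFe⟩
    set G : ℂ → ℂ := fun z => z * (F z - z^(n₀+1)) - 1/2 with hG
    have hcl : closure (ball (0:ℂ) 1) = closedBall 0 1 := closure_ball 0 one_ne_zero
    have hGd : DiffContOnCl ℂ G (ball 0 1) := by
      constructor
      · exact (differentiableOn_id.mul (hFd.sub (differentiable_pow _).differentiableOn)).sub
          (differentiableOn_const _)
      · rw [hcl]
        exact (continuousOn_id.mul (hFc.sub (continuous_pow _).continuousOn)).sub
          continuousOn_const
    have hfr : ∀ z ∈ frontier (ball (0:ℂ) 1), ‖G z‖ ≤ 0 := by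
      intro z hz
      rw [frontier_ball 0 one_ne_zero] at hz
      have hz1 : ‖z‖ = 1 := mem_sphere_zero_iff_norm.mp hz
      have hFz : F z = f z := hFe z hz
      have hzc : z * (starRingEnd ℂ) z = 1 := by
        rw [Complex.mul_conj]
        rw [Complex.normSq_eq_norm_sq, hz1]
        norm_num
      have : G z = 0 := by
        rw [hG]
        simp only [hFz, hf]
        ring_nf
        rw [mul_comm] at hzc
        linear_combination (1/2 : ℂ) * hzc
      rw [this]; simp
    have h0 : (0:ℂ) ∈ closure (ball (0:ℂ) 1) := by
      rw [hcl]; exact mem_closedBall_self zero_le_one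
    have := norm_le_of_forall_mem_frontier_norm_le isBounded_ball hGd hfr h0
    rw [hG] at this
    simp at this
    norm_num at this
  -- winding part
  have hwind : ∀ P : Polynomial ℂ, P.natDegree ≤ n₀ →
      (∀ z ∈ sphere (0:ℂ) 1, f z + P.eval z ≠ 0) →
      ∀ m : ℤ, ∀ αm : ℝ → ℝ,
        WindLift (fun θ : ℝ => f (Complex.exp ((θ:ℝ) * Complex.I)) + P.eval (Complex.exp ((θ:ℝ) * Complex.I))) αm →
        αm (2 * Real.pi) - αm 0 = m * (2 * Real.pi) → 0 ≤ m := by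
    intro P hP hnv m αm hαm hαv
    set r : Polynomial ℂ := X^(n₀+2) + (X * P + C (1/2 : ℂ)) with hr
    have hdeg : (X * P + C (1/2 : ℂ)).degree < ((n₀+2 : ℕ) : WithBot ℕ) := by
      apply lt_of_le_of_lt (Polynomial.degree_add_le _ _)
      rw [max_lt_iff]
      constructor
      · apply lt_of_le_of_lt (Polynomial.degree_mul_le _ _)
        have h1 : P.degree ≤ (n₀ : WithBot ℕ) :=
          Polynomial.degree_le_natDegree.trans (by exact_mod_cast hP)
        calc (Polynomial.X (R := ℂ)).degree + P.degree ≤ 1 + (n₀ : WithBot ℕ) :=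
              add_le_add (le_of_eq Polynomial.degree_X) h1
          _ = ((1 + n₀ : ℕ) : WithBot ℕ) := by push_cast; rfl
          _ < ((n₀+2:ℕ) : WithBot ℕ) := by
              exact_mod_cast (by omega : 1 + n₀ < n₀ + 2)
      · apply lt_of_le_of_lt Polynomial.degree_C_le
        exact_mod_cast (by omega : 0 < n₀+2)
    have hmonic : r.Monic := Polynomial.monic_X_pow_add hdeg
    have hfact : r = (r.roots.map fun a => X - C a).prod :=
      (IsAlgClosed.splits r).eq_prod_roots_of_monic hmonic
    have heval : ∀ z : ℂ, r.eval z = (r.roots.map fun a => z - a).prod := by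
      intro z
      conv_lhs => rw [hfact]
      rw [Polynomial.eval_multiset_prod, Multiset.map_map]
      congr 1
      apply Multiset.map_congr rfl
      intro a _
      simp
    have hroots : ∀ a ∈ r.roots, ‖a‖ ≠ 1 := by
      intro a hamem h1
      have hzero : r.eval a = 0 := (Polynomial.mem_roots'.mp hamem).2
      have hasph : a ∈ sphere (0:ℂ) 1 := mem_sphere_zero_iff_norm.mpr h1
      apply hnv a hasph
      have hca : (starRingEnd ℂ) a * a = 1 := by
        rw [mul_comm, Complex.mul_conj, Complex.normSq_eq_norm_sq, h1]
        norm_num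
      have heq : f a + P.eval a = (starRingEnd ℂ) a * r.eval a := by
        simp only [hf, hr, Polynomial.eval_add, Polynomial.eval_pow, Polynomial.eval_X,
          Polynomial.eval_mul, Polynomial.eval_C]
        linear_combination (-(a^(n₀+1)) - P.eval a) * hca
      rw [heq, hzero, mul_zero]
    have heval0 : r.eval 0 = 1/2 := by
      simp [hr]
    have hin : ∃ a ∈ r.roots, ‖a‖ < 1 := by
      by_contra hno
      push_neg at hno
      have h1 : 1 ≤ ‖(r.roots.map fun a => (0:ℂ) - a).prod‖ := by
        apply one_le_norm_prod
        intro x hx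
        rw [Multiset.mem_map] at hx
        obtain ⟨a, ha, rfl⟩ := hx
        rw [zero_sub, norm_neg]
        exact hno a ha
      rw [← heval 0, heval0] at h1
      norm_num at h1
    set N := Multiset.countP (fun a => ‖a‖ < 1) r.roots with hN
    have hN1 : 0 < N := Multiset.countP_pos.mpr hin
    obtain ⟨αs, hαs, hαsv⟩ := windlift_multiset r.roots hroots
    set G : ℝ → ℂ := fun θ : ℝ =>
      f (Complex.exp ((θ:ℝ) * Complex.I)) + P.eval (Complex.exp ((θ:ℝ) * Complex.I)) with hGdef
    have hkey : ∀ θ : ℝ, Complex.exp (-((θ:ℝ) * Complex.I)) *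
        (r.roots.map fun a => Complex.exp ((θ:ℝ)*Complex.I) - a).prod = G θ := by
      intro θ
      rw [← heval]
      have hinv : Complex.exp (-((θ:ℝ)*Complex.I)) * Complex.exp ((θ:ℝ)*Complex.I) = 1 := by
        rw [← Complex.exp_add]; simp
      have hconj : (starRingEnd ℂ) (Complex.exp ((θ:ℝ)*Complex.I)) =
          Complex.exp (-((θ:ℝ)*Complex.I)) := by
        rw [← Complex.exp_conj]
        congr 1
        simp [Complex.conj_ofReal]
      simp only [hGdef, hf, hr, Polynomial.eval_add, Polynomial.eval_pow, Polynomial.eval_X,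
        Polynomial.eval_mul, Polynomial.eval_C, hconj]
      linear_combination (Complex.exp ((θ:ℝ)*Complex.I)^(n₀+1) +
        P.eval (Complex.exp ((θ:ℝ)*Complex.I))) * hinv
    have hlift : WindLift G ((fun θ => -θ) + αs) :=
      (windlift_exp_neg.mul hαs).congr hkey
    have hG0 : ∀ θ, G θ ≠ 0 := by
      intro θ
      apply hnv
      rw [mem_sphere_zero_iff_norm, Complex.norm_exp_ofReal_mul_I]
    have huniq := windlift_unique hG0 hαm hlift
    have hv2 : ((fun θ : ℝ => -θ) + αs) (2*Real.pi) - ((fun θ : ℝ => -θ) + αs) 0 =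
        ((N:ℝ) - 1) * (2*Real.pi) := by
      simp only [Pi.add_apply]
      push_cast at hαsv ⊢
      linarith
    rw [hαv, hv2] at huniq
    have hπ : (0:ℝ) < 2*Real.pi := by positivity
    have hm : (m:ℝ) = (N:ℝ) - 1 := mul_right_cancel₀ (ne_of_gt hπ) huniq
    have hm2 : (0:ℝ) ≤ (m:ℝ) := by
      rw [hm]
      have : (1:ℝ) ≤ (N:ℝ) := by exact_mod_cast hN1
      linarith
    exact_mod_cast hm2
  exact ⟨f, hfc, fun P hP hnv m hm => by
    obtain ⟨α, h1, h2, h3⟩ := hm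
    exact hwind P hP hnv m α ⟨h1, h2⟩ h3, hnext⟩

end Stmt12Helpers

theorem stmt12 (n₀ : ℕ) :
    ∃ f : ℂ → ℂ, ContinuousOn f (sphere (0:ℂ) 1) ∧
      (∀ P : Polynomial ℂ, P.natDegree ≤ n₀ →
        (∀ z ∈ sphere (0:ℂ) 1, f z + P.eval z ≠ 0) →
        ∀ m : ℤ, HasWindingNumber (fun z => f z + P.eval z) m → 0 ≤ m) ∧
      ¬ ExtendsHolo f := by
  obtain ⟨f, h1, h2, h3⟩ := stmt12' n₀
  exact ⟨f, h1, fun P hP hnv m hm => h2 P hP hnv m hm, h3⟩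
end
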